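/- arXiv:1402.2207 — 3 statements merged into one kernel-verified Lean document; each statement's English description precedes it below -/
import Mathlib

section
/- Let L_H(i,j) = i+j be the Hankel link function and let w be a pair-matched word of length 2k that is NOT Catalan (non-crossing). Then there is a constant C (depending only on k) such that for all n, #(Π'_T(w) ∩ Π*_{L_H}(w)) ≤ C n^k; consequently lim_{n→∞} n^{-(1+k)} #(Π'_T(w) ∩ Π*_{L_H}(w)) = 0. -/
open MeasureTheory ProbabilityTheory Filter Finset
open scoped ENNReal


/-- A circuit of length `h` in `{1,…,n}` : a map `π : {0,…,h} → {1,…,n}` with `π 0 = π h`. -/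
def Circuit (h n : ℕ) := {π : Fin (h + 1) → Fin n // π 0 = π (Fin.last h)}


instance (h n : ℕ) : Fintype (Circuit h n) :=
  inferInstanceAs (Fintype {π : Fin (h + 1) → Fin n // π 0 = π (Fin.last h)})

instance (h n : ℕ) : DecidableEq (Circuit h n) :=
  inferInstanceAs (DecidableEq {π : Fin (h + 1) → Fin n // π 0 = π (Fin.last h)})

/-- The `i`-th `L`-value `L(π(i-1), π(i))` of a circuit, `i = 1,…,h`. -/
def lVal {E : Type*} (L : (n : ℕ) → Fin n → Fin n → E) {h n : ℕ}
    (π : Circuit h n) (i : Fin h) : E :=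
  L n (π.1 i.castSucc) (π.1 i.succ)

/-- A pair-matched word of length `h`, encoded as the fixed-point free involution of
`{1,…,h}` matching the two elements of each block of the pair partition. -/
def pairMatchedWord {h : ℕ} (w : Fin h → Fin h) : Prop :=
  (∀ i, w (w i) = i) ∧ ∀ i, w i ≠ i

/-- `Π*_L(w)` for a pair-matched word `w` (encoded as an involution). -/
def PiStarPair {E : Type*} (L : (n : ℕ) → Fin n → Fin n → E) {h : ℕ}
    (n : ℕ) (w : Fin h → Fin h) : Set (Circuit h n) :=
  {π | ∀ i, lVal L π i = lVal L π (w i)}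

/-- The set `W_{2k}` of pair-matched words of length `2k`, encoded as fixed-point-free
involutions. -/
def W2 (k : ℕ) : Finset (Fin (2 * k) → Fin (2 * k)) :=
  Finset.univ.filter fun w => (∀ i, w (w i) = i) ∧ ∀ i, w i ≠ i

/-- A pair-matched word (as involution) is Catalan iff the pair partition is non-crossing. -/
def noncrossing {h : ℕ} (w : Fin h → Fin h) : Prop :=
  ∀ i j : Fin h, ¬(i < j ∧ j < w i ∧ w i < w j)

instance {h : ℕ} (w : Fin h → Fin h) : Decidable (noncrossing w) :=
  inferInstanceAs (Decidable (∀ i j : Fin h, ¬(i < j ∧ j < w i ∧ w i < w j)))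

/-- The Hankel link function `L_H(i,j) = i + j`. -/
def hankLink : (n : ℕ) → Fin n → Fin n → ℕ := fun _ i j => (i : ℕ) + (j : ℕ)

/-- `Π'_T(w)` : circuits with `s(i) + s(j) = 0` whenever `w[i] = w[j]`,
for a pair-matched word `w` encoded as an involution. -/
def PiPrimeT {h : ℕ} (n : ℕ) (w : Fin h → Fin h) : Set (Circuit h n) :=
  {π | ∀ i : Fin h,
    (((π.1 i.succ : ℕ) : ℤ) - ((π.1 i.castSucc : ℕ) : ℤ)) +
      (((π.1 (w i).succ : ℕ) : ℤ) - ((π.1 (w i).castSucc : ℕ) : ℤ)) = 0}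


section AuxStatement15
open Equiv Equiv.Perm

section CycleCount
open Equiv Equiv.Perm

variable {α : Type*} [Fintype α] [DecidableEq α]

def scs (σ : Equiv.Perm α) : Setoid α :=
  ⟨σ.SameCycle, ⟨fun x => Equiv.Perm.SameCycle.refl σ x, fun h => h.symm, fun h h' => h.trans h'⟩⟩

noncomputable def ncyc (σ : Equiv.Perm α) : ℕ := Nat.card (Quotient (scs σ))

lemma sc_exists_nat {σ : Equiv.Perm α} {x y : α} (h : σ.SameCycle x y) :
    ∃ n : ℕ, (σ ^ n) x = y := by
  obtain ⟨i, _, hi⟩ := h.exists_pow_eq'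
  exact ⟨i, hi⟩

lemma R_main (σ : Equiv.Perm α) (a b x y : α) (h : σ.SameCycle x y) :
    (swap a b * σ).SameCycle x y ∨
      ((swap a b * σ).SameCycle x a ∧ (swap a b * σ).SameCycle y b) ∨
      ((swap a b * σ).SameCycle x b ∧ (swap a b * σ).SameCycle y a) := by
  classical
  obtain ⟨n, rfl⟩ := sc_exists_nat h
  induction n with
  | zero => exact Or.inl (SameCycle.refl _ _)
  | succ n IH =>
    set σ' := swap a b * σ with hσ'
    set y₀ := (σ ^ n) x with hy₀
    have hy : (σ ^ (n+1)) x = σ y₀ := by rw [pow_succ', Equiv.Perm.mul_apply]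
    rw [hy]
    have hσv : σ y₀ = swap a b (σ' y₀) := by
      simp [hσ', Equiv.Perm.mul_apply, Equiv.swap_apply_self]
    have hstep : σ'.SameCycle y₀ (σ y₀) ∨ (σ'.SameCycle y₀ a ∧ σ y₀ = b) ∨
        (σ'.SameCycle y₀ b ∧ σ y₀ = a) := by
      by_cases h1 : σ' y₀ = a
      · exact Or.inr (Or.inl ⟨⟨1, by simpa using h1⟩, by rw [hσv, h1, Equiv.swap_apply_left]⟩)
      by_cases h2 : σ' y₀ = b
      · exact Or.inr (Or.inr ⟨⟨1, by simpa using h2⟩, by rw [hσv, h2, Equiv.swap_apply_right]⟩)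
      · refine Or.inl ?_
        have : σ y₀ = σ' y₀ := by rw [hσv, Equiv.swap_apply_of_ne_of_ne h1 h2]
        rw [this]; exact ⟨1, by simp⟩
    rcases IH ⟨(n:ℤ), by rw [zpow_natCast]⟩ with hA | ⟨hxa, hyb⟩ | ⟨hxb, hya⟩ <;>
      rcases hstep with h1 | ⟨h2a, h2b⟩ | ⟨h3a, h3b⟩
    · exact Or.inl (hA.trans h1)
    · exact Or.inr (Or.inl ⟨hA.trans h2a, by rw [h2b]⟩)
    · exact Or.inr (Or.inr ⟨hA.trans h3a, by rw [h3b]⟩)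
    · exact Or.inr (Or.inl ⟨hxa, h1.symm.trans hyb⟩)
    · exact Or.inl (by rw [h2b]; exact hxa.trans (h2a.symm.trans hyb))
    · exact Or.inl (by rw [h3b]; exact hxa)
    · exact Or.inr (Or.inr ⟨hxb, h1.symm.trans hya⟩)
    · exact Or.inl (by rw [h2b]; exact hxb)
    · exact Or.inl (by rw [h3b]; exact hxb.trans (h3a.symm.trans hya))

lemma M0 {σ : Equiv.Perm α} {a b : α} (hab : ¬ σ.SameCycle a b) :
    (swap a b * σ).SameCycle b a := by
  classical
  have hex : ∃ m : ℕ, 0 < m ∧ (σ ^ m) b = b :=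
    ⟨orderOf σ, orderOf_pos σ, by rw [pow_orderOf_eq_one]; rfl⟩
  set n := Nat.find hex with hn
  obtain ⟨hnpos, hnb⟩ : 0 < n ∧ (σ ^ n) b = b := Nat.find_spec hex
  have hnea : ∀ m : ℕ, σ ((σ ^ m) b) ≠ a := by
    intro m hcon
    have hcon' : ((σ ^ (m+1)) : Equiv.Perm α) b = a := by
      rw [pow_succ', Equiv.Perm.mul_apply]; exact hcon
    refine hab ⟨-((m:ℤ)+1), ?_⟩
    have : ((σ ^ (m+1) : Equiv.Perm α))⁻¹ a = b := by
      rw [← hcon']; exact Equiv.symm_apply_apply _ _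
    rw [show -((m:ℤ)+1) = -((m+1 : ℕ) : ℤ) by push_cast; ring, zpow_neg, zpow_natCast]
    exact this
  have claim : ∀ i, i < n → ((swap a b * σ) ^ i) b = (σ ^ i) b := by
    intro i hi
    induction i with
    | zero => simp
    | succ i IH =>
      have h1 : ((swap a b * σ) ^ (i+1)) b = (swap a b) (σ ((σ ^ i) b)) := by
        rw [pow_succ', Equiv.Perm.mul_apply, IH (Nat.lt_of_succ_lt hi), Equiv.Perm.mul_apply]
      have hne_b : σ ((σ ^ i) b) ≠ b := by
        intro hcon
        have hcon' : ((σ ^ (i+1)) : Equiv.Perm α) b = b := by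
          rw [pow_succ', Equiv.Perm.mul_apply]; exact hcon
        exact Nat.find_min hex hi ⟨Nat.succ_pos i, hcon'⟩
      rw [h1, Equiv.swap_apply_of_ne_of_ne (hnea i) hne_b, pow_succ', Equiv.Perm.mul_apply]
  obtain ⟨m, hm⟩ : ∃ m, n = m + 1 := ⟨n - 1, (Nat.succ_pred_eq_of_pos hnpos).symm⟩
  refine ⟨(n : ℤ), ?_⟩
  rw [zpow_natCast]
  have : ((swap a b * σ) ^ n) b = swap a b (σ ((σ ^ m) b)) := by
    rw [hm, pow_succ', Equiv.Perm.mul_apply, claim m (by omega), Equiv.Perm.mul_apply]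
  rw [this]
  have : σ ((σ ^ m) b) = b := by
    rw [← Equiv.Perm.mul_apply, ← pow_succ', ← hm]; exact hnb
  rw [this, Equiv.swap_apply_right]

lemma sc_mono_merge {σ : Equiv.Perm α} {a b : α} (hab : ¬ σ.SameCycle a b) {x y : α}
    (h : σ.SameCycle x y) : (swap a b * σ).SameCycle x y := by
  rcases R_main σ a b x y h with h' | ⟨h1, h2⟩ | ⟨h1, h2⟩
  · exact h'
  · exact h1.trans (((M0 hab).symm).trans h2.symm)
  · exact h1.trans ((M0 hab).trans h2.symm)

end CycleCount

section Part2
variable {α : Type*} [Fintype α] [DecidableEq α]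

lemma card_le_of_surj_glue {A B : Type*} [Finite A] {f : A → B} (hf : Function.Surjective f)
    {a₁ a₂ : A} (hne : a₁ ≠ a₂) (heq : f a₁ = f a₂) : Nat.card B + 1 ≤ Nat.card A := by
  classical
  have hB : Finite B := Finite.of_surjective f hf
  set g := Function.surjInv hf with hg
  have hginj : Function.Injective g := Function.injective_surjInv hf
  have hfg : ∀ b, f (g b) = b := fun b => Function.surjInv_eq hf b
  set p : A := if g (f a₁) = a₁ then a₂ else a₁ with hp
  have hgp : ∀ b, g b ≠ p := by
    intro b hb
    by_cases hc : g (f a₁) = a₁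
    · rw [hp, if_pos hc] at hb
      have hb' : b = f a₂ := by rw [← hb, hfg]
      rw [hb', ← heq, hc] at hb
      exact hne hb
    · rw [hp, if_neg hc] at hb
      have hb' : b = f a₁ := by rw [← hb, hfg]
      rw [hb'] at hb
      exact hc hb
  have hinj : Function.Injective (Sum.elim g (fun _ : Unit => p)) := by
    rintro (u | u) (v | v) huv
    · rw [hginj huv]
    · exact absurd huv (hgp u)
    · exact absurd huv.symm (hgp v)
    · rfl
  have := Nat.card_le_card_of_injective _ hinj
  simpa [Nat.card_sum] using this

lemma ncyc_swap_mul_le (σ : Equiv.Perm α) (a b : α) :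
    ncyc (swap a b * σ) ≤ ncyc σ + 1 := by
  classical
  set σ' := swap a b * σ with hσ'
  have hR' : ∀ x y, σ'.SameCycle x y → σ.SameCycle x y ∨
      (σ.SameCycle x a ∧ σ.SameCycle y b) ∨ (σ.SameCycle x b ∧ σ.SameCycle y a) := by
    intro x y h
    have hss : swap a b * σ' = σ := by rw [hσ', ← mul_assoc, Equiv.swap_mul_self, one_mul]
    have := R_main σ' a b x y h
    rwa [hss] at this
  set f : α → Quotient (scs σ) ⊕ Unit :=
    fun x => if σ'.SameCycle x b then Sum.inr () else Sum.inl (Quotient.mk (scs σ) x) with hf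
  have wd : ∀ x y : α, σ'.SameCycle x y → f x = f y := by
    intro x y hxy
    by_cases hb : σ'.SameCycle x b
    · rw [hf]; simp only; rw [if_pos hb, if_pos (hxy.symm.trans hb)]
    · have hyb : ¬ σ'.SameCycle y b := fun h => hb (hxy.trans h)
      rw [hf]; simp only; rw [if_neg hb, if_neg hyb]
      congr 1
      apply Quotient.sound
      rcases hR' x y hxy with h' | ⟨hxa, hyb'⟩ | ⟨hxb, hya⟩
      · exact h'
      · by_cases hcab : σ.SameCycle a b
        · exact hxa.trans (hcab.trans hyb'.symm)
        · exact absurd (sc_mono_merge hcab hyb') hyb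
      · by_cases hcab : σ.SameCycle a b
        · exact hxb.trans (hcab.symm.trans hya.symm)
        · exact absurd (sc_mono_merge hcab hxb) hb
  set φ : Quotient (scs σ') → Quotient (scs σ) ⊕ Unit := Quotient.lift f wd with hφ
  have hinj : Function.Injective φ := by
    intro q1 q2
    induction q1 using Quotient.inductionOn with | h x =>
    induction q2 using Quotient.inductionOn with | h y =>
    intro heq
    rw [hφ] at heq
    simp only [Quotient.lift_mk, hf] at heq
    by_cases hxb : σ'.SameCycle x b <;> by_cases hyb : σ'.SameCycle y b
    · exact Quotient.sound (hxb.trans hyb.symm)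
    · rw [if_pos hxb, if_neg hyb] at heq; exact absurd heq (by simp)
    · rw [if_neg hxb, if_pos hyb] at heq; exact absurd heq (by simp)
    · rw [if_neg hxb, if_neg hyb] at heq
      have hxy : σ.SameCycle x y := Quotient.exact (Sum.inl.inj heq)
      apply Quotient.sound
      rcases R_main σ a b x y hxy with h' | ⟨hxa, hyb'⟩ | ⟨hxb', hya⟩
      · exact h'
      · exact absurd hyb' hyb
      · exact absurd hxb' hxb
  have := Nat.card_le_card_of_injective _ hinj
  simpa [ncyc, Nat.card_sum] using this

lemma ncyc_swap_mul_merge {σ : Equiv.Perm α} {a b : α} (hab : ¬ σ.SameCycle a b) :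
    ncyc (swap a b * σ) + 1 ≤ ncyc σ := by
  classical
  set ψ : Quotient (scs σ) → Quotient (scs (swap a b * σ)) :=
    Quotient.map id (fun x y h => sc_mono_merge hab h) with hψ
  have hsurj : Function.Surjective ψ := by
    intro q
    induction q using Quotient.inductionOn with | h x =>
    exact ⟨Quotient.mk _ x, rfl⟩
  have h1 : ψ (Quotient.mk _ a) = ψ (Quotient.mk _ b) := Quotient.sound ((M0 hab).symm)
  have h2 : (Quotient.mk (scs σ) a) ≠ Quotient.mk (scs σ) b := fun h => hab (Quotient.exact h)
  exact card_le_of_surj_glue hsurj h2 h1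

lemma ncyc_invol_mul_le : ∀ (N : ℕ) (u σ : Equiv.Perm α), u.support.card ≤ N → u * u = 1 →
    ncyc (u * σ) ≤ ncyc σ + u.support.card / 2 := by
  intro N
  induction N with
  | zero =>
    intro u σ h _
    have hu1 : u = 1 := by
      rw [← Equiv.Perm.support_eq_empty_iff, ← Finset.card_eq_zero]; omega
    simp [hu1]
  | succ N IH =>
    intro u σ hcard hu
    by_cases h0 : u.support = ∅
    · have hu1 : u = 1 := Equiv.Perm.support_eq_empty_iff.mp h0
      simp [hu1]
    · obtain ⟨a, ha⟩ := Finset.nonempty_of_ne_empty h0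
      have hua : u a ≠ a := Equiv.Perm.mem_support.mp ha
      set b := u a with hb
      have hab : a ≠ b := fun h => hua h.symm
      have hub : u b = a := by
        have := Equiv.ext_iff.mp hu a
        simpa [Equiv.Perm.mul_apply] using this
      have hbs : b ∈ u.support := Equiv.Perm.mem_support.mpr (by rw [hub]; exact hab)
      set u' := u * swap a b with hu'
      have hu'app : ∀ x, u' x = u (swap a b x) := fun x => rfl
      have h'a : u' a = a := by rw [hu'app, Equiv.swap_apply_left, hub]
      have h'b : u' b = b := by rw [hu'app, Equiv.swap_apply_right, ← hb]
      have h'x : ∀ x, x ≠ a → x ≠ b → u' x = u x := fun x h1 h2 => by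
        rw [hu'app, Equiv.swap_apply_of_ne_of_ne h1 h2]
      have hux1 : ∀ x, x ≠ b → u x ≠ a := fun x hxb h =>
        hxb (Equiv.injective u (by rw [h, hub]))
      have hux2 : ∀ x, x ≠ a → u x ≠ b := fun x hxa h =>
        hxa (Equiv.injective u (by rw [h, hb]))
      have hu'inv : u' * u' = 1 := by
        ext x
        simp only [Equiv.Perm.mul_apply, Equiv.Perm.one_apply]
        by_cases h1 : x = a
        · rw [h1, h'a, h'a]
        by_cases h2 : x = b
        · rw [h2, h'b, h'b]
        · rw [h'x x h1 h2, h'x (u x) (hux1 x h2) (hux2 x h1)]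
          have := Equiv.ext_iff.mp hu x
          simpa [Equiv.Perm.mul_apply] using this
      have hsubset : ({a, b} : Finset α) ⊆ u.support := by
        intro x hx
        simp only [Finset.mem_insert, Finset.mem_singleton] at hx
        rcases hx with rfl | rfl
        · exact ha
        · exact hbs
      have hpaircard : ({a, b} : Finset α).card = 2 := by
        rw [Finset.card_insert_of_notMem (by simp [hab]), Finset.card_singleton]
      have hsupp : u'.support = u.support \ {a, b} := by
        ext x
        simp only [Equiv.Perm.mem_support, Finset.mem_sdiff, Finset.mem_insert,
          Finset.mem_singleton]
        by_cases h1 : x = a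
        · subst h1; simp [h'a]
        by_cases h2 : x = b
        · subst h2; simp [h'b]
        · rw [h'x x h1 h2]; simp [h1, h2]
      have hcard2 : 2 ≤ u.support.card := by
        have := Finset.card_le_card hsubset
        omega
      have hcards : u'.support.card = u.support.card - 2 := by
        rw [hsupp, Finset.card_sdiff_of_subset hsubset, hpaircard]
      have hdecomp : u * σ = u' * (swap a b * σ) := by
        rw [hu', mul_assoc, ← mul_assoc (Equiv.swap a b) (Equiv.swap a b) σ,
          Equiv.swap_mul_self, one_mul]
      calc ncyc (u * σ) = ncyc (u' * (swap a b * σ)) := by rw [hdecomp]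
        _ ≤ ncyc (swap a b * σ) + u'.support.card / 2 := IH u' _ (by omega) hu'inv
        _ ≤ ncyc σ + u.support.card / 2 := by
            have := ncyc_swap_mul_le σ a b
            omega

end Part2

section Part3
variable {α : Type*} [Fintype α] [DecidableEq α]


lemma sc_invariant {f : Equiv.Perm α} {P : α → Prop} (h : ∀ v, P (f v) ↔ P v) {x y : α}
    (hxy : f.SameCycle x y) : P x ↔ P y := by
  obtain ⟨z, hz⟩ := hxy
  have hnat : ∀ (g : Equiv.Perm α), (∀ v, P (g v) ↔ P v) → ∀ (d : ℕ) (v : α),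
      P ((g ^ d) v) ↔ P v := by
    intro g hg d
    induction d with
    | zero => simp
    | succ d IH =>
      intro v
      rw [pow_succ, Equiv.Perm.mul_apply]
      exact (IH (g v)).trans (hg v)
  have hinv : ∀ v, P (f⁻¹ v) ↔ P v := by
    intro v
    have := h (f⁻¹ v)
    rw [show f (f⁻¹ v) = v from Equiv.apply_symm_apply f v] at this
    exact this.symm
  rw [← hz]
  cases z with
  | ofNat d =>
    rw [Int.ofNat_eq_coe, zpow_natCast]
    exact (hnat f h d x).symm
  | negSucc d =>
    rw [zpow_negSucc]
    exact (hnat f⁻¹ hinv (d+1) x).symm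

lemma sc_const {f : Equiv.Perm α} {β : Type*} {g : α → β} (h : ∀ v, g (f v) = g v) {x y : α}
    (hxy : f.SameCycle x y) : g x = g y := by
  have := sc_invariant (P := fun v => g v = g x)
    (fun v => by show g (f v) = g x ↔ g v = g x; rw [h v]) hxy
  exact (this.mp rfl).symm

end Part3

section Rot
variable {N : ℕ} [NeZero N]
open Fin.NatCast Fin.CommRing

lemma addRight_pow_apply (c : Fin N) (d : ℕ) (x : Fin N) :
    ((Equiv.addRight c) ^ d) x = x + (d : Fin N) * c := by
  induction d generalizing x with
  | zero => simp
  | succ d IH =>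
    rw [pow_succ, Equiv.Perm.mul_apply, IH]
    have : (Equiv.addRight c) x = x + c := rfl
    rw [this]
    push_cast
    ring

lemma sc_rot_all (x y : Fin N) : (Equiv.addRight (-1 : Fin N)).SameCycle x y := by
  refine ⟨((x - y).val : ℤ), ?_⟩
  rw [zpow_natCast, addRight_pow_apply, Fin.cast_val_eq_self, mul_neg_one,
    ← sub_eq_add_neg, sub_sub_cancel]

lemma ncyc_rot_le_one : ncyc (Equiv.addRight (-1 : Fin N)) ≤ 1 := by
  have hsub : ∀ q1 q2 : Quotient (scs (Equiv.addRight (-1 : Fin N))), q1 = q2 := by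
    intro q1 q2
    induction q1 using Quotient.inductionOn with | h x =>
    induction q2 using Quotient.inductionOn with | h y =>
    exact Quotient.sound (sc_rot_all x y)
  have hinj : Function.Injective (fun _ : Quotient (scs (Equiv.addRight (-1 : Fin N))) => ()) :=
    fun q1 q2 _ => hsub q1 q2
  have := Nat.card_le_card_of_injective _ hinj
  simpa [ncyc] using this

end Rot

lemma core_bound {N : ℕ} [NeZero N] (w : Fin N → Fin N)
    (hinv : ∀ i, w (w i) = i) (hfpf : ∀ i, w i ≠ i)
    (i j : Fin N) (h1 : i < j) (h2 : j < w i) (h3 : w i < w j) :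
    ncyc ((Function.Involutive.toPerm w hinv) * Equiv.addRight (-1 : Fin N)) + 1 ≤ N / 2 := by
  classical
  set ρ := Equiv.addRight (-1 : Fin N) with hρ
  set wp := Function.Involutive.toPerm w hinv with hwp
  have hv1 : i.val < j.val := h1
  have hv2 : j.val < (w i).val := h2
  have hv3 : (w i).val < (w j).val := h3
  have hvN : (w j).val < N := (w j).isLt
  have hN4 : 4 ≤ N := by omega
  -- the involution u fixing i, w i, j, w j and equal to w elsewhere
  set ufn : Fin N → Fin N :=
    fun x => if x = i ∨ x = w i ∨ x = j ∨ x = w j then x else w x with hufn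
  have hufn_in : ∀ x, (x = i ∨ x = w i ∨ x = j ∨ x = w j) → ufn x = x := by
    intro x hx; rw [hufn]; simp only; rw [if_pos hx]
  have hufn_out : ∀ x, ¬(x = i ∨ x = w i ∨ x = j ∨ x = w j) → ufn x = w x := by
    intro x hx; rw [hufn]; simp only; rw [if_neg hx]
  have hwout : ∀ x, ¬(x = i ∨ x = w i ∨ x = j ∨ x = w j) →
      ¬(w x = i ∨ w x = w i ∨ w x = j ∨ w x = w j) := by
    rintro x hx (h | h | h | h)
    · exact hx (Or.inr (Or.inl (by rw [← hinv x, h])))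
    · exact hx (Or.inl (by rw [← hinv x, h, hinv]))
    · exact hx (Or.inr (Or.inr (Or.inr (by rw [← hinv x, h]))))
    · exact hx (Or.inr (Or.inr (Or.inl (by rw [← hinv x, h, hinv]))))
  have hufn_invol : Function.Involutive ufn := by
    intro x
    by_cases hx : x = i ∨ x = w i ∨ x = j ∨ x = w j
    · rw [hufn_in x hx, hufn_in x hx]
    · rw [hufn_out x hx, hufn_out (w x) (hwout x hx), hinv]
  set up := Function.Involutive.toPerm ufn hufn_invol with hup
  -- distinctness
  have dij : i ≠ j := Fin.ne_of_val_ne (by omega)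
  have diwi : i ≠ w i := Fin.ne_of_val_ne (by omega)
  have diwj : i ≠ w j := Fin.ne_of_val_ne (by omega)
  have djwi : j ≠ w i := Fin.ne_of_val_ne (by omega)
  have djwj : j ≠ w j := Fin.ne_of_val_ne (by omega)
  have dwiwj : w i ≠ w j := Fin.ne_of_val_ne (by omega)
  -- decomposition
  have hdecomp : wp = up * swap j (w j) * swap i (w i) := by
    ext x
    simp only [Equiv.Perm.mul_apply]
    have hwpx : wp x = w x := rfl
    have hupx : ∀ y, up y = ufn y := fun y => rfl
    rw [hwpx, hupx]
    by_cases hxi : x = i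
    · subst hxi
      rw [Equiv.swap_apply_left, Equiv.swap_apply_of_ne_of_ne djwi.symm dwiwj,
        hufn_in _ (Or.inr (Or.inl rfl))]
    by_cases hxwi : x = w i
    · subst hxwi
      rw [Equiv.swap_apply_right, Equiv.swap_apply_of_ne_of_ne dij diwj,
        hufn_in _ (Or.inl rfl), hinv i]
    by_cases hxj : x = j
    · subst hxj
      rw [Equiv.swap_apply_of_ne_of_ne dij.symm djwi, Equiv.swap_apply_left,
        hufn_in _ (Or.inr (Or.inr (Or.inr rfl)))]
    by_cases hxwj : x = w j
    · subst hxwj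
      rw [Equiv.swap_apply_of_ne_of_ne diwj.symm dwiwj.symm, Equiv.swap_apply_right,
        hufn_in _ (Or.inr (Or.inr (Or.inl rfl))), hinv j]
    · rw [Equiv.swap_apply_of_ne_of_ne hxi hxwi, Equiv.swap_apply_of_ne_of_ne hxj hxwj,
        hufn_out x (by tauto)]
  -- chain of cycle-count bounds
  set σ₁ := swap i (w i) * ρ with hσ₁
  have c1 : ncyc σ₁ ≤ 2 := le_trans (ncyc_swap_mul_le ρ i (w i)) (by
    have := ncyc_rot_le_one (N := N)
    rw [← hρ] at this
    omega)
  -- invariant set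
  have hρv : ∀ v : Fin N, ρ v = v - 1 := fun v => by
    rw [hρ]; show v + (-1) = v - 1; rw [sub_eq_add_neg]
  have hsv : ∀ v : Fin N, (v.val = 0 ∧ (v - 1).val = N - 1) ∨
      (0 < v.val ∧ (v - 1).val = v.val - 1) := by
    intro v
    have hlt := v.isLt
    have hone : (1 : Fin N).val = 1 := by
      rw [Fin.val_one']; exact Nat.mod_eq_of_lt (by omega)
    have hsub : (v - 1).val = (v.val + (N - 1)) % N := by
      rw [Fin.sub_def]; simp only; rw [hone, Nat.add_comm]
    by_cases h : v.val = 0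
    · left
      refine ⟨h, ?_⟩
      rw [hsub, h, zero_add, Nat.mod_eq_of_lt (by omega)]
    · right
      refine ⟨by omega, ?_⟩
      rw [hsub, show v.val + (N - 1) = (v.val - 1) + N by omega, Nat.add_mod_right,
        Nat.mod_eq_of_lt (by omega)]
  have hσ₁v : ∀ v : Fin N, σ₁ v = swap i (w i) (v - 1) := by
    intro v
    rw [hσ₁, Equiv.Perm.mul_apply, hρv]
  have hA : ∀ v : Fin N, (i.val < (σ₁ v).val ∧ (σ₁ v).val ≤ (w i).val) ↔
      (i.val < v.val ∧ v.val ≤ (w i).val) := by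
    intro v
    rw [hσ₁v]
    by_cases hqi : v - 1 = i
    · rw [hqi, Equiv.swap_apply_left]
      rcases hsv v with ⟨hv0, hq⟩ | ⟨hvpos, hq⟩
      · rw [hqi] at hq; exfalso; omega
      · rw [hqi] at hq; omega
    by_cases hqwi : v - 1 = w i
    · rw [hqwi, Equiv.swap_apply_right]
      rcases hsv v with ⟨hv0, hq⟩ | ⟨hvpos, hq⟩
      · rw [hqwi] at hq; exfalso; omega
      · rw [hqwi] at hq; omega
    · rw [Equiv.swap_apply_of_ne_of_ne hqi hqwi]
      have hq1 : (v - 1).val ≠ i.val := fun h => hqi (Fin.ext h)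
      have hq2 : (v - 1).val ≠ (w i).val := fun h => hqwi (Fin.ext h)
      rcases hsv v with ⟨hv0, hq⟩ | ⟨hvpos, hq⟩
      · omega
      · omega
  have hnsc : ¬ σ₁.SameCycle j (w j) := by
    intro hsc
    have hiff := sc_invariant (P := fun v => i.val < v.val ∧ v.val ≤ (w i).val) hA hsc
    have := hiff.mp ⟨hv1, le_of_lt hv2⟩
    omega
  have c2 : ncyc (swap j (w j) * σ₁) + 1 ≤ ncyc σ₁ := ncyc_swap_mul_merge hnsc
  -- support of up
  have hup2 : up * up = 1 := by
    ext x
    simp only [Equiv.Perm.mul_apply, Equiv.Perm.one_apply]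
    exact congrArg Fin.val (hufn_invol x)
  have hsupp : up.support = ({i, w i, j, w j} : Finset (Fin N))ᶜ := by
    ext x
    rw [Equiv.Perm.mem_support, Finset.mem_compl]
    simp only [Finset.mem_insert, Finset.mem_singleton]
    by_cases hx : x = i ∨ x = w i ∨ x = j ∨ x = w j
    · have : up x = x := hufn_in x hx
      exact iff_of_false (by rw [this]; simp) (by tauto)
    · have : up x = w x := hufn_out x hx
      exact iff_of_true (by rw [this]; exact hfpf x) hx
  have hc4 : ({i, w i, j, w j} : Finset (Fin N)).card = 4 := by
    rw [Finset.card_insert_of_notMem (by simp [diwi, dij, diwj]),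
      Finset.card_insert_of_notMem (by simp [Ne.symm djwi, dwiwj]),
      Finset.card_insert_of_notMem (by simp [djwj]), Finset.card_singleton]
  have hscard : up.support.card = N - 4 := by
    rw [hsupp, Finset.card_compl, hc4, Fintype.card_fin]
  -- assemble
  have hfin : ncyc (wp * ρ) ≤ ncyc (swap j (w j) * σ₁) + (N - 4) / 2 := by
    have hτeq : wp * ρ = up * (swap j (w j) * σ₁) := by
      rw [hdecomp, hσ₁]; group
    rw [hτeq]
    have := ncyc_invol_mul_le up.support.card up (swap j (w j) * σ₁) le_rfl hup2
    omega
  omega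

end AuxStatement15

/-- for a non-Catalan pair-matched word `w`,
`#(Π'_T(w) ∩ Π*_{L_H}(w)) = O(n^k)`, hence the joint word limit is `0`. -/
theorem statement15 (k : ℕ) (hk : 1 ≤ k)
    (w : Fin (2 * k) → Fin (2 * k))
    (hw : pairMatchedWord w) (hncat : ¬ noncrossing w) :
    (∃ C : ℝ, ∀ n : ℕ,
      (Nat.card ↥(PiPrimeT n w ∩ PiStarPair hankLink n w) : ℝ) ≤ C * (n : ℝ) ^ k) ∧
    Tendsto (fun n : ℕ =>
        (Nat.card ↥(PiPrimeT n w ∩ PiStarPair hankLink n w) : ℝ) / (n : ℝ) ^ (1 + k))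
      atTop (nhds 0) := by
  classical
  obtain ⟨hwinv, hwfpf⟩ := hw
  rw [noncrossing] at hncat
  push_neg at hncat
  obtain ⟨i, j, hij, hjwi, hwiwj⟩ := hncat
  haveI : NeZero (2 * k) := ⟨by omega⟩
  set τ := (Function.Involutive.toPerm w hwinv) * Equiv.addRight (-1 : Fin (2 * k)) with hτ
  have hcyc : ncyc τ + 1 ≤ (2 * k) / 2 := core_bound w hwinv hwfpf i j hij hjwi hwiwj
  have hcyck : ncyc τ ≤ k := by omega
  have key : ∀ n : ℕ, Nat.card ↥(PiPrimeT n w ∩ PiStarPair hankLink n w) ≤ n ^ k := by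
    intro n
    rcases Nat.eq_zero_or_pos n with hn | hn
    · subst hn
      have hE : IsEmpty ↥(PiPrimeT 0 w ∩ PiStarPair hankLink 0 w) := by
        constructor
        rintro ⟨π, _⟩
        exact (π.1 0).elim0
      rw [Nat.card_of_isEmpty]
      exact Nat.zero_le _
    · have hrel : ∀ π : Circuit (2*k) n, π ∈ PiPrimeT n w ∩ PiStarPair hankLink n w →
          ∀ v : Fin (2*k), π.1 ((τ v).castSucc) = π.1 (v.castSucc) := by
        intro π hπ v
        obtain ⟨hπ1, hπ2⟩ := hπ
        have step1 : ∀ m : Fin (2*k), π.1 ((w m).castSucc) = π.1 m.succ := by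
          intro m
          have e1 := hπ1 m
          have e2 := hπ2 m
          simp only [lVal, hankLink] at e2
          apply Fin.ext
          omega
        have hone : (1 : Fin (2*k)).val = 1 := by
          rw [Fin.val_one']; exact Nat.mod_eq_of_lt (by omega)
        have hsucc : ∀ m : Fin (2*k), π.1 m.succ = π.1 ((m + 1).castSucc) := by
          intro m
          have hmlt := m.isLt
          have haddval : (m + 1).val = (m.val + 1) % (2*k) := by
            rw [Fin.add_def, hone]
          by_cases hv : m.val + 1 < 2*k
          · have hcs : m.succ = (m + 1).castSucc := by
              apply Fin.ext
              rw [Fin.val_succ, Fin.coe_castSucc, haddval, Nat.mod_eq_of_lt hv]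
            rw [hcs]
          · have h2k : m.val + 1 = 2*k := by omega
            have hlast : m.succ = Fin.last (2*k) := by
              apply Fin.ext
              rw [Fin.val_succ, Fin.val_last, h2k]
            have hzero : (m + 1).castSucc = (0 : Fin (2*k+1)) := by
              apply Fin.ext
              rw [Fin.coe_castSucc, haddval, h2k, Nat.mod_self]
              rfl
            rw [hlast, hzero, ← π.2]
        have hsub1 : τ v = w (v - 1) := by
          rw [hτ, Equiv.Perm.mul_apply]
          have hadd : (Equiv.addRight (-1 : Fin (2*k))) v = v - 1 := by
            show v + (-1) = v - 1
            rw [sub_eq_add_neg]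
          rw [hadd]
          rfl
        rw [hsub1, step1 (v - 1), hsucc (v - 1), sub_add_cancel]
      set S := (PiPrimeT n w ∩ PiStarPair hankLink n w) with hS
      have hconst : ∀ π : ↥S, ∀ x y : Fin (2*k), τ.SameCycle x y →
          (π : Circuit (2*k) n).1 (x.castSucc) = (π : Circuit (2*k) n).1 (y.castSucc) :=
        fun π x y h => sc_const (g := fun v => (π : Circuit (2*k) n).1 (v.castSucc))
          (hrel π.1 π.2) h
      set Φ : ↥S → (Quotient (scs τ) → Fin n) :=
        fun π q => (π : Circuit (2*k) n).1 (q.out.castSucc) with hΦ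
      have hout : ∀ v : Fin (2*k), τ.SameCycle (Quotient.mk (scs τ) v).out v := fun v =>
        Quotient.exact (Quotient.out_eq (Quotient.mk (scs τ) v))
      have hval : ∀ (π : ↥S) (v : Fin (2*k)),
          (π : Circuit (2*k) n).1 (v.castSucc) = Φ π (Quotient.mk _ v) :=
        fun π v => hconst π v (Quotient.mk (scs τ) v).out (hout v).symm
      have hΦinj : Function.Injective Φ := by
        intro π π' h
        apply Subtype.ext
        apply Subtype.ext
        funext x
        by_cases hx : x.val < 2*k
        · have hxeq : x = (⟨x.val, hx⟩ : Fin (2*k)).castSucc := by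
            apply Fin.ext; rfl
          rw [hxeq, hval π, hval π', h]
        · have hxl : x = Fin.last (2*k) := by
            apply Fin.ext
            rw [Fin.val_last]
            have := x.isLt
            omega
          have h0 : ((0 : Fin (2*k)).castSucc) = (0 : Fin (2*k+1)) := by
            apply Fin.ext; rfl
          rw [hxl]
          calc (π : Circuit (2*k) n).1 (Fin.last _) = (π : Circuit (2*k) n).1 0 :=
                ((π : Circuit (2*k) n).2).symm
            _ = Φ π (Quotient.mk _ 0) := by rw [← hval π 0, h0]
            _ = Φ π' (Quotient.mk _ 0) := by rw [h]
            _ = (π' : Circuit (2*k) n).1 0 := by rw [← hval π' 0, h0]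
            _ = (π' : Circuit (2*k) n).1 (Fin.last _) := (π' : Circuit (2*k) n).2
      calc Nat.card ↥S ≤ Nat.card (Quotient (scs τ) → Fin n) :=
            Nat.card_le_card_of_injective Φ hΦinj
        _ = Nat.card (Fin n) ^ Nat.card (Quotient (scs τ)) := Nat.card_fun
        _ = n ^ ncyc τ := by rw [Nat.card_eq_fintype_card, Fintype.card_fin]; rfl
        _ ≤ n ^ k := Nat.pow_le_pow_right hn hcyck
  constructor
  · refine ⟨1, fun n => ?_⟩
    rw [one_mul]
    calc (Nat.card ↥(PiPrimeT n w ∩ PiStarPair hankLink n w) : ℝ) ≤ ((n ^ k : ℕ) : ℝ) := by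
          exact_mod_cast key n
      _ = (n : ℝ) ^ k := by push_cast; ring
  · apply squeeze_zero' (g := fun n : ℕ => 1 / (n : ℝ))
    · exact Filter.Eventually.of_forall fun n =>
        div_nonneg (Nat.cast_nonneg _) (pow_nonneg (Nat.cast_nonneg _) _)
    · filter_upwards [Filter.eventually_ge_atTop 1] with n hn
      have hnpos : (0:ℝ) < n := by exact_mod_cast hn
      rw [div_le_div_iff₀ (by positivity) hnpos]
      have hkeyR : (Nat.card ↥(PiPrimeT n w ∩ PiStarPair hankLink n w) : ℝ) ≤ (n:ℝ)^k := by
        calc (Nat.card ↥(PiPrimeT n w ∩ PiStarPair hankLink n w) : ℝ) ≤ ((n ^ k : ℕ) : ℝ) := by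
              exact_mod_cast key n
          _ = (n : ℝ) ^ k := by push_cast; ring
      calc (Nat.card ↥(PiPrimeT n w ∩ PiStarPair hankLink n w) : ℝ) * n ≤ (n:ℝ)^k * n :=
            mul_le_mul_of_nonneg_right hkeyR (le_of_lt hnpos)
        _ = 1 * (n:ℝ)^(1+k) := by rw [pow_add, pow_one]; ring
    · exact tendsto_one_div_atTop_nhds_zero_nat
end

section
/- Let L be a link function satisfying Property B. Then for every h ≥ 1 there exists a constant C_h (independent of n) such that for all n, #K^L_{h,2} ≤ C_h n^{h+1} and #K^L_{h,3} ≤ C_h n^{⌊3h/2⌋+2}, where K^L_{h,t} is the set of t-tuples of circuits of length h in {1,…,n} that are jointly and across L-matched. -/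
open MeasureTheory ProbabilityTheory Filter Finset
open scoped ENNReal


/-- Property B : the number of occurrences of any value in any row is uniformly bounded. -/
def propertyB {E : Type*} [DecidableEq E] (L : (n : ℕ) → Fin n → Fin n → E) : Prop :=
  ∃ Δ : ℕ, ∀ (n : ℕ) (k : Fin n) (t : E),
    (Finset.univ.filter fun l : Fin n => L n k l = t).card ≤ Δ

def symmLink {E : Type*} (L : (n : ℕ) → Fin n → Fin n → E) : Prop :=
  ∀ (n : ℕ) (i j : Fin n), L n i j = L n j i

/-- `k_n`, the number of distinct `L`-values. -/
def kCount {E : Type*} [DecidableEq E] (L : (n : ℕ) → Fin n → Fin n → E) (n : ℕ) : ℕ :=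
  (Finset.univ.image fun p : Fin n × Fin n => L n p.1 p.2).card

/-- `α_n`, the maximal number of occurrences of a single `L`-value. -/
def alphaCount {E : Type*} [DecidableEq E] (L : (n : ℕ) → Fin n → Fin n → E) (n : ℕ) : ℕ :=
  (Finset.univ.image fun p : Fin n × Fin n => L n p.1 p.2).sup fun t =>
    (Finset.univ.filter fun p : Fin n × Fin n => L n p.1 p.2 = t).card

/-- Conditions (1.4) : `k_n → ∞` and `k_n α_n = O(n²)`. -/
def cond14 {E : Type*} [DecidableEq E] (L : (n : ℕ) → Fin n → Fin n → E) : Prop :=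
  Tendsto (kCount L) atTop atTop ∧ ∃ C : ℕ, ∀ n, kCount L n * alphaCount L n ≤ C * n ^ 2

/-- The set `K^L_{h,t}` of `t`-tuples of circuits of length `h` that are jointly
`L`-matched (every `L`-value occurs at least twice in total) and across `L`-matched
(each circuit shares an `L`-value with some other circuit). -/
def KSet {E : Type*} [DecidableEq E] (L : (n : ℕ) → Fin n → Fin n → E)
    (h n t : ℕ) : Set (Fin t → Circuit h n) :=
  {π | (∀ (j : Fin t) (i : Fin h),
          2 ≤ (Finset.univ.filter fun q : Fin t × Fin h =>
            lVal L (π q.1) q.2 = lVal L (π j) i).card) ∧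
       ∀ j : Fin t, ∃ j' : Fin t, j' ≠ j ∧
          ∃ i i' : Fin h, lVal L (π j) i = lVal L (π j') i'}

namespace St17

attribute [local instance] Classical.propDecidable

variable {E : Type*} [DecidableEq E]

variable (L : (n : ℕ) → Fin n → Fin n → E)

section defs

variable {h n t : ℕ} (hh : 0 < h)

/-- next index, cyclically -/
def nxt (i : Fin h) : Fin h := ⟨((i : ℕ) + 1) % h, Nat.mod_lt _ hh⟩

/-- vertex `i` of the rotated traversal of slot `j` -/
def vert (π : Fin t → Circuit h n) (σ : Equiv.Perm (Fin t)) (o : Fin t → Fin h)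
    (j : Fin t) (i : Fin h) : Fin n :=
  (π (σ j)).1 ⟨(((o (σ j) : ℕ)) + (i : ℕ)) % h, Nat.lt_succ_of_lt (Nat.mod_lt _ hh)⟩

/-- value of edge `p.2` of slot `p.1` -/
def eval (π : Fin t → Circuit h n) (σ : Equiv.Perm (Fin t)) (o : Fin t → Fin h)
    (p : Fin t × Fin h) : E :=
  L n (vert hh π σ o p.1 p.2) (vert hh π σ o p.1 (nxt hh p.2))

/-- time of a position -/
def tm (p : Fin t × Fin h) : ℕ := (p.1 : ℕ) * h + (p.2 : ℕ)

lemma tm_inj : Function.Injective (tm (h := h) (t := t)) := by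
  rintro ⟨j, e⟩ ⟨j', e'⟩ hte
  simp only [tm] at hte
  have he := e.2; have he' := e'.2
  have hj : (j : ℕ) = j' := by
    rcases lt_trichotomy (j : ℕ) (j' : ℕ) with hl | heq | hl
    · exfalso
      have h2 := Nat.mul_le_mul_right h hl
      rw [Nat.succ_mul] at h2
      omega
    · exact heq
    · exfalso
      have h2 := Nat.mul_le_mul_right h hl
      rw [Nat.succ_mul] at h2
      omega
  rw [hj] at hte
  have : (e : ℕ) = e' := by omega
  simp [Prod.ext_iff, Fin.ext_iff, hj, this]

lemma mod_cancel {o x : ℕ} (ho : o < h) (hx : x < h) :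
    (o + (x + (h - o)) % h) % h = x := by
  rw [Nat.add_mod_mod]
  have : o + (x + (h - o)) = x + h := by omega
  rw [this, Nat.add_mod_right, Nat.mod_eq_of_lt hx]

lemma rot_inj {o : ℕ} (ho : o < h) {e e' : Fin h} (heq : (o + (e:ℕ)) % h = (o + (e':ℕ)) % h) :
    e = e' := by
  have key : ∀ x : Fin h, ((o + (x:ℕ)) % h + (h - o)) % h = x := by
    intro x
    rw [Nat.mod_add_mod]
    have : o + (x:ℕ) + (h - o) = x + h := by omega
    rw [this, Nat.add_mod_right, Nat.mod_eq_of_lt x.2]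
  have := key e
  rw [heq, key e'] at this
  exact (Fin.ext this).symm

/-- vertex of a circuit at a cyclic (natural number) index -/
def cvert (c : Circuit h n) (a : ℕ) : Fin n :=
  c.1 ⟨a % h, Nat.lt_succ_of_lt (Nat.mod_lt _ hh)⟩

lemma cvert_mod_add (c : Circuit h n) (a b : ℕ) :
    cvert hh c (a + b % h) = cvert hh c (a + b) := by
  unfold cvert
  exact congrArg c.1 (Fin.ext (by simp [Nat.add_mod_mod]))

lemma cvert_succ (c : Circuit h n) (m : ℕ) :
    cvert hh c (m + 1) = c.1 (Fin.succ ⟨m % h, Nat.mod_lt _ hh⟩) := by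
  rw [Fin.succ_mk]
  unfold cvert
  rcases Nat.lt_or_ge (m % h + 1) h with hlt | hge
  · exact congrArg c.1 (Fin.ext (show (m + 1) % h = m % h + 1 by
      rw [← Nat.mod_add_mod, Nat.mod_eq_of_lt hlt]))
  · have hmh : m % h + 1 = h := by have := Nat.mod_lt m hh; omega
    have h0 : (m + 1) % h = 0 := by rw [← Nat.mod_add_mod, hmh, Nat.mod_self]
    simp only [h0, hmh]
    show c.1 0 = c.1 (Fin.last h)
    exact c.2

lemma cvert_lVal (c : Circuit h n) (m : ℕ) :
    L n (cvert hh c m) (cvert hh c (m + 1)) = lVal L c ⟨m % h, Nat.mod_lt _ hh⟩ := by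
  rw [cvert_succ]
  rfl

lemma vert_cvert (π : Fin t → Circuit h n) (σ : Equiv.Perm (Fin t)) (o : Fin t → Fin h)
    (j : Fin t) (i : Fin h) :
    vert hh π σ o j i = cvert hh (π (σ j)) ((o (σ j) : ℕ) + (i : ℕ)) := rfl

/-- the edge value equals an `lVal` of the original circuit -/
lemma eval_eq_lVal (π : Fin t → Circuit h n) (σ : Equiv.Perm (Fin t)) (o : Fin t → Fin h)
    (p : Fin t × Fin h) :
    eval L hh π σ o p
      = lVal L (π (σ p.1)) ⟨(((o (σ p.1)) : ℕ) + (p.2 : ℕ)) % h, Nat.mod_lt _ hh⟩ := by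
  obtain ⟨j, e⟩ := p
  show L n (vert hh π σ o j e) (vert hh π σ o j (nxt hh e)) = _
  rw [vert_cvert, vert_cvert]
  have : cvert hh (π (σ j)) ((o (σ j) : ℕ) + ((nxt hh e : Fin h) : ℕ))
      = cvert hh (π (σ j)) ((o (σ j) : ℕ) + ((e : ℕ) + 1)) := by
    show cvert hh (π (σ j)) ((o (σ j) : ℕ) + ((e : ℕ) + 1) % h) = _
    exact cvert_mod_add hh _ _ _
  rw [this, ← Nat.add_assoc]
  exact cvert_lVal L hh _ _

end defs

section code

variable {h n t K D' : ℕ}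

def counter {h t D' : ℕ} (f : Fin t × Fin h → Option ((Fin t × Fin h) × Fin D'))
    (p : Fin t × Fin h) : ℕ :=
  (Finset.univ.filter fun q => tm q < tm p ∧ f q = none).card

abbrev CodeT (h n t K D' : ℕ) :=
  Equiv.Perm (Fin t) × (Fin t → Fin h) × (Fin t → Fin n) × (Fin K → Fin n)
    × ((Fin t × Fin h) → Option ((Fin t × Fin h) × Fin D'))

def Faithful (hh : 0 < h) (π : Fin t → Circuit h n) (c : CodeT h n t K D') : Prop :=
  (∀ j, c.2.2.1 j = vert hh π c.1 c.2.1 j ⟨0, hh⟩) ∧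
  ∀ (j : Fin t) (e : Fin h), (e : ℕ) + 1 < h →
    ((∀ _ : c.2.2.2.2 (j, e) = none,
        ∃ hk : counter c.2.2.2.2 (j, e) < K,
          c.2.2.2.1 ⟨counter c.2.2.2.2 (j, e), hk⟩ = vert hh π c.1 c.2.1 j (nxt hh e)) ∧
     (∀ q r, c.2.2.2.2 (j, e) = some (q, r) →
        tm q < tm (j, e) ∧
        vert hh π c.1 c.2.1 j (nxt hh e) =
          ((Finset.univ.filter fun l : Fin n =>
              L n (vert hh π c.1 c.2.1 j e) l = eval L hh π c.1 c.2.1 q).sort (· ≤ ·)).getD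
            (r : ℕ) (vert hh π c.1 c.2.1 j e)))

lemma faithful_inj (hh : 0 < h) {π π' : Fin t → Circuit h n} {c : CodeT h n t K D'}
    (h1 : Faithful L hh π c) (h2 : Faithful L hh π' c) : π = π' := by
  obtain ⟨σ, o, s, vl, f⟩ := c
  obtain ⟨hs, hf⟩ := h1
  obtain ⟨hs', hf'⟩ := h2
  have key : ∀ (N : ℕ) (j : Fin t) (i : Fin h), (j : ℕ) * h + (i : ℕ) < N →
      vert hh π σ o j i = vert hh π' σ o j i := by
    intro N
    induction N with
    | zero => intro j i hlt; exact absurd hlt (Nat.not_lt_zero _)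
    | succ N ih =>
      intro j i hlt
      rcases Nat.lt_succ_iff_lt_or_eq.mp hlt with hlt' | hN
      · exact ih j i hlt'
      rcases Nat.eq_zero_or_pos (i : ℕ) with hi0 | hipos
      · have hieq : i = ⟨0, hh⟩ := Fin.ext hi0
        rw [hieq, ← hs j, ← hs' j]
      · have he1 : (i : ℕ) - 1 < h := by omega
        set e : Fin h := ⟨(i : ℕ) - 1, he1⟩ with he
        have hnx : nxt hh e = i := Fin.ext (by
          show ((i : ℕ) - 1 + 1) % h = (i : ℕ)
          rw [Nat.sub_add_cancel hipos, Nat.mod_eq_of_lt i.2])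
        have hstep : (e : ℕ) + 1 < h := by
          show (i : ℕ) - 1 + 1 < h
          rw [Nat.sub_add_cancel hipos]; exact i.2
        have htme : (j : ℕ) * h + (e : ℕ) < N := by
          show (j : ℕ) * h + ((i : ℕ) - 1) < N
          omega
        rw [← hnx]
        cases hfc : f (j, e) with
        | none =>
          obtain ⟨hk, hv⟩ := (hf j e hstep).1 hfc
          obtain ⟨hk', hv'⟩ := (hf' j e hstep).1 hfc
          rw [← hv, ← hv']
        | some qr =>
          obtain ⟨q, r⟩ := qr
          obtain ⟨htq, hv⟩ := (hf j e hstep).2 q r hfc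
          obtain ⟨_, hv'⟩ := (hf' j e hstep).2 q r hfc
          have htq' : (q.1 : ℕ) * h + (q.2 : ℕ) < (j : ℕ) * h + (e : ℕ) := htq
          have hje : vert hh π σ o j e = vert hh π' σ o j e := ih j e htme
          have hq1 : vert hh π σ o q.1 q.2 = vert hh π' σ o q.1 q.2 :=
            ih q.1 q.2 (by omega)
          have hq2 : vert hh π σ o q.1 (nxt hh q.2) = vert hh π' σ o q.1 (nxt hh q.2) := by
            apply ih
            show (q.1 : ℕ) * h + ((q.2 : ℕ) + 1) % h < N
            rcases Nat.lt_or_ge ((q.2 : ℕ) + 1) h with hc | hc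
            · rw [Nat.mod_eq_of_lt hc]; omega
            · have hq2h : (q.2 : ℕ) + 1 = h := by have := q.2.2; omega
              rw [hq2h, Nat.mod_self]; omega
          have hev : eval L hh π σ o q = eval L hh π' σ o q := by
            unfold eval; rw [hq1, hq2]
          rw [hv, hv', hje, hev]
  funext a
  apply Subtype.ext
  funext k
  have hrec : ∀ (m : ℕ) (hm : m < h),
      (π a).1 ⟨m, Nat.lt_succ_of_lt hm⟩ = (π' a).1 ⟨m, Nat.lt_succ_of_lt hm⟩ := by
    intro m hm
    set i : Fin h := ⟨(m + (h - (o a : ℕ))) % h, Nat.mod_lt _ hh⟩ with hi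
    have hv := key ((σ.symm a : ℕ) * h + (i : ℕ) + 1) (σ.symm a) i (Nat.lt_succ_self _)
    rw [vert_cvert, vert_cvert] at hv
    simp only [Equiv.apply_symm_apply] at hv
    unfold cvert at hv
    have hidx : ((o a : ℕ) + (i : ℕ)) % h = m := mod_cancel (o a).2 hm
    simp only [hidx] at hv
    exact hv
  rcases Nat.lt_or_ge (k : ℕ) h with hk | hk
  · exact hrec (k : ℕ) hk
  · have hkh : k = Fin.last h := Fin.ext (by have := k.2; simp [Fin.last]; omega)
    rw [hkh, ← (π a).2, ← (π' a).2]
    exact hrec 0 hh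

/-- `p` is the first position (in traversal time) carrying its value -/
def isFirst (hh : 0 < h) (π : Fin t → Circuit h n) (σ : Equiv.Perm (Fin t))
    (o : Fin t → Fin h) (p : Fin t × Fin h) : Prop :=
  ∀ q, eval L hh π σ o q = eval L hh π σ o p → tm p ≤ tm q

noncomputable def firstSteps (hh : 0 < h) (π : Fin t → Circuit h n) (σ : Equiv.Perm (Fin t))
    (o : Fin t → Fin h) : Finset (Fin t × Fin h) :=
  Finset.univ.filter fun p => ((p.2 : ℕ) + 1 < h) ∧ isFirst L hh π σ o p

section encoder

variable (hh : 0 < h) (π : Fin t → Circuit h n) (σ : Equiv.Perm (Fin t)) (o : Fin t → Fin h)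

noncomputable def wit (p : Fin t × Fin h) : Fin t × Fin h :=
  if hp : ∃ q, eval L hh π σ o q = eval L hh π σ o p ∧ tm q < tm p then hp.choose else p

lemma wit_spec {p : Fin t × Fin h} (hp : ¬ isFirst L hh π σ o p) :
    eval L hh π σ o (wit L hh π σ o p) = eval L hh π σ o p ∧ tm (wit L hh π σ o p) < tm p := by
  unfold isFirst at hp
  push_neg at hp
  obtain ⟨q, hq1, hq2⟩ := hp
  have hex : ∃ q, eval L hh π σ o q = eval L hh π σ o p ∧ tm q < tm p := ⟨q, hq1, hq2⟩
  unfold wit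
  rw [dif_pos hex]
  exact hex.choose_spec

noncomputable def rk (p : Fin t × Fin h) : ℕ :=
  List.idxOf (vert hh π σ o p.1 (nxt hh p.2))
    ((Finset.univ.filter fun l : Fin n =>
        L n (vert hh π σ o p.1 p.2) l = eval L hh π σ o (wit L hh π σ o p)).sort (· ≤ ·))

lemma rk_mem {p : Fin t × Fin h} (hp : ¬ isFirst L hh π σ o p) :
    vert hh π σ o p.1 (nxt hh p.2) ∈
      ((Finset.univ.filter fun l : Fin n =>
        L n (vert hh π σ o p.1 p.2) l = eval L hh π σ o (wit L hh π σ o p)).sort (· ≤ ·)) := by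
  rw [Finset.mem_sort]
  rw [Finset.mem_filter]
  exact ⟨Finset.mem_univ _, ((wit_spec L hh π σ o hp).1).symm⟩

lemma rk_lt {Δ : ℕ} (hΔ : ∀ (k : Fin n) (t' : E),
      (Finset.univ.filter fun l : Fin n => L n k l = t').card ≤ Δ)
    {p : Fin t × Fin h} (hp : ¬ isFirst L hh π σ o p) :
    rk L hh π σ o p ≤ Δ := by
  have h1 := List.idxOf_lt_length_iff.mpr (rk_mem L hh π σ o hp)
  have h2 : ((Finset.univ.filter fun l : Fin n =>
      L n (vert hh π σ o p.1 p.2) l = eval L hh π σ o (wit L hh π σ o p)).sort (· ≤ ·)).length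
      = (Finset.univ.filter fun l : Fin n =>
      L n (vert hh π σ o p.1 p.2) l = eval L hh π σ o (wit L hh π σ o p)).card :=
    Finset.length_sort _
  have := hΔ (vert hh π σ o p.1 p.2) (eval L hh π σ o (wit L hh π σ o p))
  unfold rk
  omega

noncomputable def encF (Δ : ℕ) : Fin t × Fin h → Option ((Fin t × Fin h) × Fin (Δ + 1)) :=
  fun p =>
    if ((p.2 : ℕ) + 1 < h) ∧ ¬ isFirst L hh π σ o p then
      some (wit L hh π σ o p, ⟨min (rk L hh π σ o p) Δ, Nat.lt_succ_of_le (min_le_right _ _)⟩)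
    else if (p.2 : ℕ) + 1 < h then none
    else some (p, ⟨0, Nat.succ_pos _⟩)

lemma encF_none {Δ : ℕ} {p : Fin t × Fin h} :
    encF L hh π σ o Δ p = none ↔ (((p.2 : ℕ) + 1 < h) ∧ isFirst L hh π σ o p) := by
  unfold encF
  split_ifs with h1 h2
  · simp only [reduceCtorEq, false_iff]; tauto
  · simp only [true_iff]; tauto
  · simp only [reduceCtorEq, false_iff]; tauto

lemma counter_mono {D' : ℕ} (f : Fin t × Fin h → Option ((Fin t × Fin h) × Fin D'))
    {p p' : Fin t × Fin h} (hp : f p = none) (ht : tm p < tm p') :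
    counter f p < counter f p' := by
  apply Finset.card_lt_card
  constructor
  · intro q hq
    rw [Finset.mem_filter] at hq ⊢
    exact ⟨hq.1, lt_trans hq.2.1 ht, hq.2.2⟩
  · intro hsub
    have hmem : p ∈ Finset.univ.filter fun q => tm q < tm p' ∧ f q = none := by
      rw [Finset.mem_filter]; exact ⟨Finset.mem_univ _, ht, hp⟩
    have := hsub hmem
    rw [Finset.mem_filter] at this
    omega

lemma counter_inj {D' : ℕ} (f : Fin t × Fin h → Option ((Fin t × Fin h) × Fin D'))
    {p p' : Fin t × Fin h} (hp : f p = none) (hp' : f p' = none)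
    (hc : counter f p = counter f p') : p = p' := by
  rcases lt_trichotomy (tm p) (tm p') with hl | heq | hl
  · exact absurd hc (Nat.ne_of_lt (counter_mono f hp hl))
  · exact tm_inj heq
  · exact absurd hc.symm (Nat.ne_of_lt (counter_mono f hp' hl))

lemma counter_lt_card {Δ : ℕ} {p : Fin t × Fin h} (hp : encF L hh π σ o Δ p = none) :
    counter (encF L hh π σ o Δ) p < (firstSteps L hh π σ o).card := by
  apply Finset.card_lt_card
  constructor
  · intro q hq
    rw [Finset.mem_filter] at hq
    rw [firstSteps, Finset.mem_filter]
    exact ⟨Finset.mem_univ _, (encF_none L hh π σ o).mp hq.2.2⟩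
  · intro hsub
    have hmem : p ∈ firstSteps L hh π σ o := by
      rw [firstSteps, Finset.mem_filter]
      exact ⟨Finset.mem_univ _, (encF_none L hh π σ o).mp hp⟩
    have := hsub hmem
    rw [Finset.mem_filter] at this
    omega

noncomputable def vlist (hn : 0 < n) (Δ K : ℕ) : Fin K → Fin n := fun k =>
  if hx : ∃ p, encF L hh π σ o Δ p = none ∧ counter (encF L hh π σ o Δ) p = (k : ℕ) then
    vert hh π σ o hx.choose.1 (nxt hh hx.choose.2)
  else ⟨0, hn⟩

lemma exists_faithful (hn : 0 < n) (Δ K : ℕ)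
    (hΔ : ∀ (k : Fin n) (t' : E),
      (Finset.univ.filter fun l : Fin n => L n k l = t').card ≤ Δ)
    (hNN : (firstSteps L hh π σ o).card ≤ K) :
    ∃ c : CodeT h n t K (Δ + 1), Faithful L hh π c := by
  refine ⟨(σ, o, fun j => vert hh π σ o j ⟨0, hh⟩, vlist L hh π σ o hn Δ K,
    encF L hh π σ o Δ), fun j => rfl, ?_⟩
  intro j e hstep
  constructor
  · intro hfc
    have hcl : counter (encF L hh π σ o Δ) (j, e) < K :=
      lt_of_lt_of_le (counter_lt_card L hh π σ o hfc) hNN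
    refine ⟨hcl, ?_⟩
    show vlist L hh π σ o hn Δ K _ = _
    unfold vlist
    have hx : ∃ p, encF L hh π σ o Δ p = none ∧
        counter (encF L hh π σ o Δ) p = ((⟨counter (encF L hh π σ o Δ) (j, e), hcl⟩ : Fin K) : ℕ) :=
      ⟨(j, e), hfc, rfl⟩
    rw [dif_pos hx]
    have hspec := hx.choose_spec
    have : hx.choose = (j, e) := counter_inj _ hspec.1 hfc hspec.2
    rw [this]
  · intro q r hfc
    dsimp only at hfc ⊢
    unfold encF at hfc
    split_ifs at hfc with h1
    · rw [Option.some_inj] at hfc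
      injection hfc with hq0 hr0
      have hq : q = wit L hh π σ o (j, e) := hq0.symm
      have hr : (r : ℕ) = min (rk L hh π σ o (j, e)) Δ := by rw [← hr0]
      have hrk : (r : ℕ) = rk L hh π σ o (j, e) := by
        rw [hr, min_eq_left (rk_lt L hh π σ o hΔ h1.2)]
      constructor
      · rw [hq]; exact (wit_spec L hh π σ o h1.2).2
      · rw [hq, hrk]
        unfold rk
        rw [List.getD_eq_getElem _ _ (List.idxOf_lt_length_iff.mpr (rk_mem L hh π σ o h1.2))]
        exact (List.getElem_idxOf _).symm


end encoder

section combinat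

variable (hh : 0 < h) (π : Fin t → Circuit h n)

lemma eval_image (σ : Equiv.Perm (Fin t)) (o : Fin t → Fin h) :
    (Finset.univ.image fun p : Fin t × Fin h => eval L hh π σ o p)
      = (Finset.univ.image fun q : Fin t × Fin h => lVal L (π q.1) q.2) := by
  apply Finset.Subset.antisymm
  · intro v hv
    rw [Finset.mem_image] at hv ⊢
    obtain ⟨p, _, hp⟩ := hv
    exact ⟨(σ p.1, ⟨(((o (σ p.1)) : ℕ) + (p.2 : ℕ)) % h, Nat.mod_lt _ hh⟩),
      Finset.mem_univ _, by rw [← hp, eval_eq_lVal]⟩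
  · intro v hv
    rw [Finset.mem_image] at hv ⊢
    obtain ⟨q, _, hq⟩ := hv
    refine ⟨(σ.symm q.1, ⟨((q.2 : ℕ) + (h - ((o q.1) : ℕ))) % h, Nat.mod_lt _ hh⟩),
      Finset.mem_univ _, ?_⟩
    rw [eval_eq_lVal, ← hq]
    simp only [Equiv.apply_symm_apply]
    congr 1
    exact Fin.ext (mod_cancel (o q.1).2 q.2.2)

lemma firstSteps_le (σ : Equiv.Perm (Fin t)) (o : Fin t → Fin h) :
    (firstSteps L hh π σ o).card
      ≤ (Finset.univ.image fun q : Fin t × Fin h => lVal L (π q.1) q.2).card := by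
  rw [← eval_image L hh π σ o]
  apply Finset.card_le_card_of_injOn (fun p => eval L hh π σ o p)
  · intro p _
    exact Finset.mem_image_of_mem _ (Finset.mem_univ p)
  · intro p hp p' hp' hee
    simp only [firstSteps, Finset.mem_coe, Finset.mem_filter] at hp hp'
    exact tm_inj (le_antisymm (hp.2.2 p' hee.symm) (hp'.2.2 p hee))

lemma cross_case (ht0 : 0 < t) (c₀ : Fin t) (i₀ : Fin h)
    (hu : (Finset.univ.filter fun m : Fin h => lVal L (π c₀) m = lVal L (π c₀) i₀).card = 1) :
    ∃ (σ : Equiv.Perm (Fin t)) (o : Fin t → Fin h),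
      (firstSteps L hh π σ o).card + 1
        ≤ (Finset.univ.image fun q : Fin t × Fin h => lVal L (π q.1) q.2).card := by
  set τ := lVal L (π c₀) i₀ with hτ
  set σ : Equiv.Perm (Fin t) := Equiv.swap ⟨0, ht0⟩ c₀ with hσ
  set o : Fin t → Fin h :=
    fun c => if c = c₀ then ⟨((i₀ : ℕ) + 1) % h, Nat.mod_lt _ hh⟩ else ⟨0, hh⟩ with ho
  have hσ0 : σ ⟨0, ht0⟩ = c₀ := Equiv.swap_apply_left _ _
  have hoc : ((o c₀ : Fin h) : ℕ) = ((i₀ : ℕ) + 1) % h := by simp [ho]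
  have hclose : ((((i₀ : ℕ) + 1) % h) + (h - 1)) % h = (i₀ : ℕ) := by
    rw [Nat.mod_add_mod]
    have : (i₀ : ℕ) + 1 + (h - 1) = (i₀ : ℕ) + h := by omega
    rw [this, Nat.add_mod_right, Nat.mod_eq_of_lt i₀.2]
  set p₀ : Fin t × Fin h := (⟨0, ht0⟩, ⟨h - 1, by omega⟩) with hp₀
  have hep0 : eval L hh π σ o p₀ = τ := by
    rw [eval_eq_lVal]
    show lVal L (π (σ ⟨0, ht0⟩)) _ = τ
    rw [hτ]
    have : π (σ (⟨0, ht0⟩ : Fin t)) = π c₀ := by rw [hσ0]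
    rw [show (σ (⟨0, ht0⟩ : Fin t)) = c₀ from hσ0]
    congr 1
    apply Fin.ext
    show (((o c₀ : Fin h) : ℕ) + ((h : ℕ) - 1)) % h = (i₀ : ℕ)
    rw [hoc]
    exact hclose
  have hkey : ∀ p ∈ firstSteps L hh π σ o, eval L hh π σ o p ≠ τ := by
    rintro ⟨j, e⟩ hp heval
    rw [firstSteps, Finset.mem_filter] at hp
    obtain ⟨-, hstep0, hfirst⟩ := hp
    have hstep : (e : ℕ) + 1 < h := hstep0
    have h1 : tm (j, e) ≤ tm p₀ := hfirst p₀ (by rw [hep0, heval])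
    have htm : (j : ℕ) * h + (e : ℕ) ≤ 0 * h + (h - 1) := h1
    have hj0 : (j : ℕ) = 0 := by
      by_contra hj
      have h1le : 1 ≤ (j : ℕ) := by omega
      have := Nat.mul_le_mul_right h h1le
      rw [one_mul] at this
      omega
    have hjeq : j = ⟨0, ht0⟩ := Fin.ext hj0
    rw [eval_eq_lVal] at heval
    rw [hjeq] at heval
    rw [show (σ (⟨0, ht0⟩ : Fin t)) = c₀ from hσ0] at heval
    -- heval : lVal L (π c₀) ⟨(o c₀ + e) % h, _⟩ = τ
    have hmem1 : (⟨(((o c₀ : Fin h) : ℕ) + (e : ℕ)) % h, Nat.mod_lt _ hh⟩ : Fin h)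
        ∈ Finset.univ.filter fun m : Fin h => lVal L (π c₀) m = lVal L (π c₀) i₀ := by
      rw [Finset.mem_filter]
      exact ⟨Finset.mem_univ _, heval⟩
    have hmem2 : i₀ ∈ Finset.univ.filter fun m : Fin h => lVal L (π c₀) m = lVal L (π c₀) i₀ := by
      rw [Finset.mem_filter]; exact ⟨Finset.mem_univ _, rfl⟩
    have heqi : (⟨(((o c₀ : Fin h) : ℕ) + (e : ℕ)) % h, Nat.mod_lt _ hh⟩ : Fin h) = i₀ :=
      Finset.card_le_one.mp hu.le _ hmem1 _ hmem2
    have heqi' : ((((i₀ : ℕ) + 1) % h) + (e : ℕ)) % h = (i₀ : ℕ) := by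
      have := congrArg (Fin.val) heqi
      rwa [hoc] at this
    have hlast : e = (⟨h - 1, by omega⟩ : Fin h) := by
      apply rot_inj (o := ((i₀ : ℕ) + 1) % h) (Nat.mod_lt _ hh)
      show ((((i₀ : ℕ) + 1) % h) + (e : ℕ)) % h = ((((i₀ : ℕ) + 1) % h) + (h - 1)) % h
      rw [heqi', hclose]
    have : (e : ℕ) = h - 1 := by
      have := congrArg Fin.val hlast
      simpa using this
    omega
  have hτm : τ ∈ Finset.univ.image (fun p : Fin t × Fin h => eval L hh π σ o p) := by
    rw [Finset.mem_image]
    exact ⟨p₀, Finset.mem_univ _, hep0⟩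
  have hinj : (firstSteps L hh π σ o).card
      ≤ ((Finset.univ.image fun p : Fin t × Fin h => eval L hh π σ o p).erase τ).card := by
    apply Finset.card_le_card_of_injOn (fun p => eval L hh π σ o p)
    · intro p hp
      rw [Finset.mem_coe, Finset.mem_erase]
      exact ⟨hkey p hp, Finset.mem_image_of_mem _ (Finset.mem_univ p)⟩
    · intro p hp p' hp' hee
      simp only [firstSteps, Finset.mem_coe, Finset.mem_filter] at hp hp'
      exact tm_inj (le_antisymm (hp.2.2 p' hee.symm) (hp'.2.2 p hee))
  have hcard := Finset.card_erase_of_mem hτm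
  have hpos : 0 < (Finset.univ.image fun p : Fin t × Fin h => eval L hh π σ o p).card :=
    Finset.card_pos.mpr ⟨τ, hτm⟩
  refine ⟨σ, o, ?_⟩
  rw [← eval_image L hh π σ o]
  omega

lemma exists_good_rotation (ht : 2 ≤ t) (hh' : 0 < h) (hπ : π ∈ KSet L h n t) :
    ∃ (σ : Equiv.Perm (Fin t)) (o : Fin t → Fin h),
      (firstSteps L hh π σ o).card ≤ t * h / 2 - 1 := by
  set img := Finset.univ.image (fun q : Fin t × Fin h => lVal L (π q.1) q.2) with himg
  set B := img.card with hB
  have hsum : t * h = ∑ v ∈ img,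
      (Finset.univ.filter fun q : Fin t × Fin h => lVal L (π q.1) q.2 = v).card := by
    rw [← Finset.card_eq_sum_card_fiberwise
      (fun q _ => Finset.mem_image_of_mem (fun q : Fin t × Fin h => lVal L (π q.1) q.2)
        (Finset.mem_univ q))]
    simp [Finset.card_univ]
  have hmult : ∀ v ∈ img, 2 ≤
      (Finset.univ.filter fun q : Fin t × Fin h => lVal L (π q.1) q.2 = v).card := by
    intro v hv
    rw [himg, Finset.mem_image] at hv
    obtain ⟨q, _, rfl⟩ := hv
    exact hπ.1 q.1 q.2
  have h2B : 2 * B ≤ t * h := by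
    have : ∑ v ∈ img, 2 ≤ ∑ v ∈ img,
        (Finset.univ.filter fun q : Fin t × Fin h => lVal L (π q.1) q.2 = v).card :=
      Finset.sum_le_sum hmult
    rw [Finset.sum_const, smul_eq_mul] at this
    omega
  have ht0 : 0 < t := by omega
  obtain ⟨j', hne, i, i', hvv⟩ := hπ.2 ⟨0, ht0⟩
  set τ := lVal L (π ⟨0, ht0⟩) i with hτ
  by_cases ha : (Finset.univ.filter fun m : Fin h => lVal L (π ⟨0, ht0⟩) m = τ).card = 1
  · obtain ⟨σ, o, hcard⟩ := cross_case L hh π ht0 ⟨0, ht0⟩ i ha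
    rw [← himg] at hcard
    exact ⟨σ, o, by omega⟩
  by_cases ha' : (Finset.univ.filter fun m : Fin h => lVal L (π j') m = lVal L (π j') i').card = 1
  · obtain ⟨σ, o, hcard⟩ := cross_case L hh π ht0 j' i' ha'
    rw [← himg] at hcard
    exact ⟨σ, o, by omega⟩
  -- both multiplicities ≥ 2
  have hi1 : 0 < (Finset.univ.filter fun m : Fin h => lVal L (π ⟨0, ht0⟩) m = τ).card :=
    Finset.card_pos.mpr ⟨i, by rw [Finset.mem_filter]; exact ⟨Finset.mem_univ _, rfl⟩⟩
  have hi1' : 0 < (Finset.univ.filter fun m : Fin h => lVal L (π j') m = lVal L (π j') i').card :=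
    Finset.card_pos.mpr ⟨i', by rw [Finset.mem_filter]; exact ⟨Finset.mem_univ _, rfl⟩⟩
  have ha2 : 2 ≤ (Finset.univ.filter fun m : Fin h => lVal L (π ⟨0, ht0⟩) m = τ).card := by omega
  have ha2' : 2 ≤ (Finset.univ.filter fun m : Fin h => lVal L (π j') m = lVal L (π j') i').card := by
    omega
  -- the τ-fiber over all positions has at least 4 elements
  have hfib : 4 ≤ (Finset.univ.filter fun q : Fin t × Fin h => lVal L (π q.1) q.2 = τ).card := by
    have hsub : ({(⟨0, ht0⟩ : Fin t)} ×ˢ (Finset.univ.filter fun m : Fin h =>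
          lVal L (π ⟨0, ht0⟩) m = τ))
        ∪ ({j'} ×ˢ (Finset.univ.filter fun m : Fin h => lVal L (π j') m = lVal L (π j') i'))
        ⊆ Finset.univ.filter fun q : Fin t × Fin h => lVal L (π q.1) q.2 = τ := by
      intro x hx
      rw [Finset.mem_union] at hx
      rw [Finset.mem_filter]
      refine ⟨Finset.mem_univ _, ?_⟩
      rcases hx with hx | hx
      · rw [Finset.mem_product, Finset.mem_singleton] at hx
        obtain ⟨hx1, hx2⟩ := hx
        rw [Finset.mem_filter] at hx2
        rw [hx1]
        exact hx2.2
      · rw [Finset.mem_product, Finset.mem_singleton] at hx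
        obtain ⟨hx1, hx2⟩ := hx
        rw [Finset.mem_filter] at hx2
        rw [hx1, hx2.2, ← hvv]
    have hdisj : Disjoint ({(⟨0, ht0⟩ : Fin t)} ×ˢ (Finset.univ.filter fun m : Fin h =>
          lVal L (π ⟨0, ht0⟩) m = τ))
        ({j'} ×ˢ (Finset.univ.filter fun m : Fin h => lVal L (π j') m = lVal L (π j') i')) := by
      rw [Finset.disjoint_left]
      intro x hx1 hx2
      rw [Finset.mem_product, Finset.mem_singleton] at hx1 hx2
      exact hne ((hx1.1.symm.trans hx2.1).symm)
    have hcu := Finset.card_le_card hsub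
    rw [Finset.card_union_of_disjoint hdisj, Finset.card_product, Finset.card_product] at hcu
    simp only [Finset.card_singleton, one_mul] at hcu
    omega
  have hτm : τ ∈ img := by
    rw [himg, Finset.mem_image]
    exact ⟨(⟨0, ht0⟩, i), Finset.mem_univ _, rfl⟩
  have hsplit : (Finset.univ.filter fun q : Fin t × Fin h => lVal L (π q.1) q.2 = τ).card
      + ∑ v ∈ img.erase τ,
        (Finset.univ.filter fun q : Fin t × Fin h => lVal L (π q.1) q.2 = v).card
      = ∑ v ∈ img,
        (Finset.univ.filter fun q : Fin t × Fin h => lVal L (π q.1) q.2 = v).card :=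
    Finset.add_sum_erase img
      (fun v => (Finset.univ.filter fun q : Fin t × Fin h => lVal L (π q.1) q.2 = v).card) hτm
  have herasesum : ∑ v ∈ img.erase τ, 2 ≤ ∑ v ∈ img.erase τ,
      (Finset.univ.filter fun q : Fin t × Fin h => lVal L (π q.1) q.2 = v).card :=
    Finset.sum_le_sum fun v hv => hmult v (Finset.mem_of_mem_erase hv)
  rw [Finset.sum_const, smul_eq_mul] at herasesum
  have hcerase : (img.erase τ).card = B - 1 := by rw [Finset.card_erase_of_mem hτm]
  have hBle : B ≤ t * h / 2 - 1 := by
    have hB1 : 1 ≤ B := Finset.card_pos.mpr ⟨τ, hτm⟩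
    omega
  exact ⟨1, fun _ => ⟨0, hh⟩, le_trans (firstSteps_le L hh π _ _) hBle⟩

end combinat

section final

lemma card_codeT (h n t K D' : ℕ) :
    Nat.card (CodeT h n t K D')
      = t.factorial * h ^ t * (t * h * D' + 1) ^ (t * h) * n ^ (t + K) := by
  rw [Nat.card_eq_fintype_card]
  simp [Fintype.card_prod, Fintype.card_fun, Fintype.card_option, Fintype.card_perm]
  ring

lemma main_bound {t : ℕ} (ht : 2 ≤ t) (h n : ℕ) (hh : 0 < h) (Δ : ℕ)
    (hΔ : ∀ (n : ℕ) (k : Fin n) (t' : E),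
      (Finset.univ.filter fun l : Fin n => L n k l = t').card ≤ Δ) :
    Nat.card ↥(KSet L h n t) ≤
      (t.factorial * h ^ t * (t * h * (Δ + 1) + 1) ^ (t * h)) * n ^ (t + (t * h / 2 - 1)) := by
  rcases Nat.eq_zero_or_pos n with hn | hn
  · subst hn
    have hE : IsEmpty (Circuit h 0) := ⟨fun c => (c.1 0).elim0⟩
    have hNE : Nonempty (Fin t) := ⟨⟨0, by omega⟩⟩
    have hE2 : IsEmpty (Fin t → Circuit h 0) := inferInstance
    have hE3 : IsEmpty ↥(KSet L h 0 t) := ⟨fun x => hE2.false x.1⟩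
    rw [Nat.card_of_isEmpty]
    exact Nat.zero_le _
  · have key : ∀ x : ↥(KSet L h n t),
        ∃ c : CodeT h n t (t * h / 2 - 1) (Δ + 1), Faithful L hh x.1 c := by
      intro x
      obtain ⟨σ, o, hgood⟩ := exists_good_rotation L hh x.1 ht hh x.2
      exact exists_faithful L hh x.1 σ o hn Δ _ (hΔ n) hgood
    choose F hF using key
    have hinj : Function.Injective F := by
      intro x y hxy
      exact Subtype.ext (faithful_inj L hh (hF x) (hxy ▸ hF y))
    have hcard := Nat.card_le_card_of_injective F hinj
    rw [card_codeT] at hcard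
    exact hcard

end final

end code

end St17

/-- under Property B, `#K^L_{h,2} = O(n^{h+1})` and
`#K^L_{h,3} = O(n^{⌊3h/2⌋+2})`. -/
theorem statement17
    {E : Type*} [DecidableEq E] (L : (n : ℕ) → Fin n → Fin n → E)
    (hB : propertyB L) (h : ℕ) (hh : 1 ≤ h) :
    ∃ C : ℝ, ∀ n : ℕ,
      (Nat.card ↥(KSet L h n 2) : ℝ) ≤ C * (n : ℝ) ^ (h + 1) ∧
      (Nat.card ↥(KSet L h n 3) : ℝ) ≤ C * (n : ℝ) ^ (3 * h / 2 + 2) := by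
  obtain ⟨Δ, hΔ⟩ := hB
  have hh0 : 0 < h := hh
  set A2 : ℕ := Nat.factorial 2 * h ^ 2 * (2 * h * (Δ + 1) + 1) ^ (2 * h) with hA2
  set A3 : ℕ := Nat.factorial 3 * h ^ 3 * (3 * h * (Δ + 1) + 1) ^ (3 * h) with hA3
  refine ⟨((max A2 A3 : ℕ) : ℝ), fun n => ⟨?_, ?_⟩⟩
  · have hb := St17.main_bound L (le_refl 2) h n hh0 Δ hΔ
    have e2 : 2 + (2 * h / 2 - 1) = h + 1 := by omega
    rw [e2] at hb
    calc (Nat.card ↥(KSet L h n 2) : ℝ) ≤ ((A2 * n ^ (h + 1) : ℕ) : ℝ) := Nat.cast_le.mpr hb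
    _ = (A2 : ℝ) * (n : ℝ) ^ (h + 1) := by push_cast; ring
    _ ≤ ((max A2 A3 : ℕ) : ℝ) * (n : ℝ) ^ (h + 1) := by
        apply mul_le_mul_of_nonneg_right _ (by positivity)
        exact_mod_cast le_max_left A2 A3
  · have hb := St17.main_bound L (by norm_num : 2 ≤ 3) h n hh0 Δ hΔ
    have e3 : 3 + (3 * h / 2 - 1) = 3 * h / 2 + 2 := by omega
    rw [e3] at hb
    calc (Nat.card ↥(KSet L h n 3) : ℝ) ≤ ((A3 * n ^ (3 * h / 2 + 2) : ℕ) : ℝ) := Nat.cast_le.mpr hb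
    _ = (A3 : ℝ) * (n : ℝ) ^ (3 * h / 2 + 2) := by push_cast; ring
    _ ≤ ((max A2 A3 : ℕ) : ℝ) * (n : ℝ) ^ (3 * h / 2 + 2) := by
        apply mul_le_mul_of_nonneg_right _ (by positivity)
        exact_mod_cast le_max_right A2 A3
end

section
/- Let L_X and L_Y be link functions satisfying Property B and let h be even. Then there exists a constant C (depending only on h, Δ_{L_X} and Δ_{L_Y}, not on n) such that for every n and every fixed circuit π₂ of length h in {1,…,n}, the number of circuits π₁ of length h in {1,…,n} satisfying (a) π₁ is pair-matched with respect to L_X (each of its L_X-values occurs exactly twice among its h values), (b) no L_X-value of π₁ equals an L_X-value of π₂, and (c) at least one L_Y-value of π₁ equals an L_Y-value of π₂, is at most C n^{h/2}. -/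
open MeasureTheory ProbabilityTheory Filter Finset
open scoped ENNReal


section aux


private lemma modCases (a M : ℕ) (h2 : a < 2 * M) :
    (a < M ∧ a % M = a) ∨ (M ≤ a ∧ a % M = a - M) := by
  rcases Nat.lt_or_ge a M with hlt | hge
  · exact Or.inl ⟨hlt, Nat.mod_eq_of_lt hlt⟩
  · exact Or.inr ⟨hge, by rw [Nat.mod_eq_sub_mod hge, Nat.mod_eq_of_lt (by omega)]⟩

private lemma seqBound {α β : Type*} [DecidableEq β] :
    ∀ (m : ℕ) (L : ℕ → α) (b : ℕ → ℕ) (S : Finset (α → β)),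
      (∀ f ∈ S, ∀ g ∈ S, (∀ t, t < m → f (L t) = g (L t)) → f = g) →
      (∀ t, t < m → ∀ f ∈ S,
        ((S.filter fun g => ∀ t', t' < t → g (L t') = f (L t')).image
          fun g => g (L t)).card ≤ b t) →
      S.card ≤ ∏ t ∈ Finset.range m, b t := by
  intro m
  induction m with
  | zero =>
    intro L b S hinj _
    simp only [Finset.range_zero, Finset.prod_empty]
    exact Finset.card_le_one.mpr fun f hf g hg => hinj f hf g hg (fun t ht => by omega)
  | succ m ih =>
    intro L b S hinj hb
    rcases S.eq_empty_or_nonempty with rfl | ⟨f₀, hf₀⟩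
    · simp
    have hfib : ∀ v, (S.filter fun g => g (L 0) = v).card ≤ ∏ t ∈ Finset.range m, b (t + 1) := by
      intro v
      apply ih (fun t => L (t + 1)) (fun t => b (t + 1))
      · intro f hf g hg hagree
        obtain ⟨hfS, hfv⟩ := Finset.mem_filter.mp hf
        obtain ⟨hgS, hgv⟩ := Finset.mem_filter.mp hg
        apply hinj f hfS g hgS
        intro t ht
        cases t with
        | zero => rw [hfv, hgv]
        | succ t => exact hagree t (by omega)
      · intro t ht f hf
        obtain ⟨hfS, hfv⟩ := Finset.mem_filter.mp hf
        have hsub : ((S.filter fun g => g (L 0) = v).filter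
              fun g => ∀ t', t' < t → g (L (t' + 1)) = f (L (t' + 1)))
            ⊆ S.filter fun g => ∀ t', t' < t + 1 → g (L t') = f (L t') := by
          intro g hg
          obtain ⟨hg1, hg2⟩ := Finset.mem_filter.mp hg
          obtain ⟨hgS, hgv⟩ := Finset.mem_filter.mp hg1
          refine Finset.mem_filter.mpr ⟨hgS, fun t' ht' => ?_⟩
          cases t' with
          | zero => rw [hgv, hfv]
          | succ t'' => exact hg2 t'' (by omega)
        calc (((S.filter fun g => g (L 0) = v).filter
              fun g => ∀ t', t' < t → g (L (t' + 1)) = f (L (t' + 1))).image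
              fun g => g (L (t + 1))).card
            ≤ ((S.filter fun g => ∀ t', t' < t + 1 → g (L t') = f (L t')).image
              fun g => g (L (t + 1))).card :=
              Finset.card_le_card (Finset.image_subset_image hsub)
          _ ≤ b (t + 1) := hb (t + 1) (by omega) f hfS
    have hV : (S.image fun g => g (L 0)).card ≤ b 0 := by
      refine le_trans (Finset.card_le_card (Finset.image_subset_image ?_)) (hb 0 (by omega) f₀ hf₀)
      intro x hx
      exact Finset.mem_filter.mpr ⟨hx, fun t' ht' => absurd ht' (Nat.not_lt_zero t')⟩
    calc S.card = ∑ v ∈ S.image (fun g => g (L 0)), (S.filter fun g => g (L 0) = v).card :=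
          Finset.card_eq_sum_card_image _ _
      _ ≤ ∑ _v ∈ S.image (fun g => g (L 0)), ∏ t ∈ Finset.range m, b (t + 1) :=
          Finset.sum_le_sum fun v _ => hfib v
      _ = (S.image fun g => g (L 0)).card * ∏ t ∈ Finset.range m, b (t + 1) := by
          rw [Finset.sum_const, smul_eq_mul]
      _ ≤ b 0 * ∏ t ∈ Finset.range m, b (t + 1) :=
          Nat.mul_le_mul_right _ hV
      _ = ∏ t ∈ Finset.range (m + 1), b t := by
          rw [Finset.prod_range_succ', mul_comm]

private lemma ordInj {h c : ℕ} (hch : c < h) (x y : ℕ) (hx : x < h) (hy : y < h)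
    (hxy : x ≠ y) : (x + h - c) % h ≠ (y + h - c) % h := by
  have m1 := modCases (x + h - c) h (by omega)
  have m2 := modCases (y + h - c) h (by omega)
  omega

private lemma keyArith {h c s u : ℕ} (hch : c < h) (hu : u < h)
    (ht : s + 2 < h + 1)
    (hp : 1 ≤ (c + (s + 2)) % (h + 1))
    (hord : (u + h - c) % h < ((c + (s + 2)) % (h + 1) - 1 + h - c) % h) :
    (u + (h + 1) - c) % (h + 1) < s + 2 ∧ (u + 1 + (h + 1) - c) % (h + 1) < s + 2 := by
  have hplt : (c + (s + 2)) % (h + 1) < h + 1 := Nat.mod_lt _ (by omega)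
  have m1 := modCases (c + (s + 2)) (h + 1) (by omega)
  have m3 := modCases ((c + (s + 2)) % (h + 1) - 1 + h - c) h (by omega)
  have m2 := modCases (u + h - c) h (by omega)
  have m4 := modCases (u + (h + 1) - c) (h + 1) (by omega)
  have m5 := modCases (u + 1 + (h + 1) - c) (h + 1) (by omega)
  omega

private lemma halfCount {h : ℕ} (w : Fin h → Fin h) (hw1 : ∀ j, w (w j) = j)
    (hw2 : ∀ j, w j ≠ j) (ord : Fin h → ℕ)
    (hordinj : ∀ x y : Fin h, x ≠ y → ord x ≠ ord y) :
    (Finset.univ.filter fun j => ord j < ord (w j)).card = h / 2 := by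
  classical
  have hAB : (Finset.univ.filter fun j => ord j < ord (w j)).card
      = (Finset.univ.filter fun j => ord (w j) < ord j).card := by
    apply Finset.card_bij' (fun j _ => w j) (fun j _ => w j)
    · intro a ha
      simp only [Finset.mem_filter, Finset.mem_univ, true_and] at ha ⊢
      rwa [hw1]
    · intro a ha
      simp only [Finset.mem_filter, Finset.mem_univ, true_and] at ha ⊢
      rwa [hw1]
    · intro a _; exact hw1 a
    · intro a _; exact hw1 a
  have hneg : (Finset.univ.filter fun j => ¬ ord j < ord (w j))
      = Finset.univ.filter fun j => ord (w j) < ord j := by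
    ext j
    simp only [Finset.mem_filter, Finset.mem_univ, true_and]
    have := hordinj (w j) j (hw2 j)
    omega
  have hsum := Finset.card_filter_add_card_filter_not
    (s := (Finset.univ : Finset (Fin h))) (p := fun j => ord j < ord (w j))
  rw [hneg, Finset.card_univ, Fintype.card_fin] at hsum
  omega

private lemma exists_match {E : Type*} [DecidableEq E] {h n : ℕ}
    (LX : (n : ℕ) → Fin n → Fin n → E) (π : Circuit h n)
    (hpm : ∀ i : Fin h,
      (Finset.univ.filter fun i' : Fin h => lVal LX π i' = lVal LX π i).card = 2) :
    ∃ w : Fin h → Fin h, (∀ j, w (w j) = j) ∧ (∀ j, w j ≠ j) ∧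
      ∀ j, lVal LX π j = lVal LX π (w j) := by
  classical
  set s : Fin h → Finset (Fin h) :=
    (fun j => Finset.univ.filter fun j' => lVal LX π j' = lVal LX π j) with hs
  have hmem : ∀ j, j ∈ s j := fun j => by simp [hs]
  have hers : ∀ j, ((s j).erase j).Nonempty := by
    intro j
    apply Finset.card_pos.mp
    rw [Finset.card_erase_of_mem (hmem j), hpm j]
    norm_num
  set w : Fin h → Fin h := (fun j => ((s j).erase j).min' (hers j)) with hw
  have hwmem : ∀ j, w j ∈ (s j).erase j := fun j => Finset.min'_mem _ _
  have hwne : ∀ j, w j ≠ j := fun j => (Finset.mem_erase.mp (hwmem j)).1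
  have hwval : ∀ j, lVal LX π (w j) = lVal LX π j := by
    intro j
    have h2 : w j ∈ Finset.univ.filter (fun j' => lVal LX π j' = lVal LX π j) :=
      (Finset.mem_erase.mp (hwmem j)).2
    exact (Finset.mem_filter.mp h2).2
  have hss : ∀ j, s (w j) = s j := by
    intro j
    ext x
    simp only [hs, Finset.mem_filter, Finset.mem_univ, true_and, hwval j]
  have hset : ∀ j, s j = {j, w j} := by
    intro j
    symm
    apply Finset.eq_of_subset_of_card_le
    · intro x hx
      rcases Finset.mem_insert.mp hx with rfl | hx
      · exact hmem x
      · rw [Finset.mem_singleton] at hx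
        subst hx
        exact (Finset.mem_erase.mp (hwmem j)).2
    · rw [hpm j, Finset.card_insert_of_notMem (by simp [Ne.symm (hwne j)]),
        Finset.card_singleton]
  have hww : ∀ j, w (w j) = j := by
    intro j
    have h1 : (s (w j)).erase (w j) = {j} := by
      rw [hss j, hset j]
      ext x
      simp only [Finset.mem_erase, Finset.mem_insert, Finset.mem_singleton]
      constructor
      · rintro ⟨hne, rfl | rfl⟩
        · rfl
        · exact absurd rfl hne
      · rintro rfl
        exact ⟨Ne.symm (hwne _), Or.inl rfl⟩
    have h2 := hwmem (w j)
    rw [h1, Finset.mem_singleton] at h2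
    exact h2
  exact ⟨w, hww, hwne, fun j => (hwval j).symm⟩


private def trav (h c : ℕ) (t : ℕ) : Fin (h + 1) :=
  ⟨(c + t) % (h + 1), Nat.mod_lt _ (Nat.succ_pos h)⟩

private def ordF (h c : ℕ) (x : ℕ) : ℕ := (x + h - c) % h

private def freeP (h c : ℕ) (w : Fin h → Fin h) (t : ℕ) : Prop :=
  ∃ j : Fin h, (c + t) % (h + 1) = (j : ℕ) + 1 ∧ ordF h c j < ordF h c (w j)

private noncomputable def bfun (h c n ΔX ΔY : ℕ) (w : Fin h → Fin h) (t : ℕ) : ℕ :=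
  if t = 0 then n
  else if t = 1 then ΔY
  else @ite _ (freeP h c w t) (Classical.propDecidable _) n (ΔX + 1)

private lemma classBound {E E' : Type*} [DecidableEq E] [DecidableEq E']
    (LX : (n : ℕ) → Fin n → Fin n → E) (LY : (n : ℕ) → Fin n → Fin n → E')
    (ΔX ΔY : ℕ)
    (hX : ∀ (n : ℕ) (k : Fin n) (t : E),
      (Finset.univ.filter fun l : Fin n => LX n k l = t).card ≤ ΔX)
    (hY : ∀ (n : ℕ) (k : Fin n) (t : E'),
      (Finset.univ.filter fun l : Fin n => LY n k l = t).card ≤ ΔY)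
    {h : ℕ} (hh : Even h) (n : ℕ) (π₂ : Circuit h n) (i i' : Fin h)
    (w : Fin h → Fin h) (hw1 : ∀ j, w (w j) = j) (hw2 : ∀ j, w j ≠ j) :
    (Finset.univ.filter fun π : Circuit h n =>
        (∀ j, lVal LX π j = lVal LX π (w j)) ∧ lVal LY π i = lVal LY π₂ i').card
      ≤ (ΔY + 1) * (ΔX + 1) ^ h * n ^ (h / 2) := by
  classical
  rcases Nat.eq_zero_or_pos n with rfl | hn
  · have hempty : IsEmpty (Circuit h 0) := ⟨fun π => (π.1 0).elim0⟩
    rw [Finset.univ_eq_empty, Finset.filter_empty]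
    simp
  have hch : (i : ℕ) < h := i.isLt
  have hh2 : 2 ≤ h := by
    obtain ⟨r, hr⟩ := hh
    omega
  set c := (i : ℕ) with hc
  set L : ℕ → Fin (h + 1) := trav h c with hL
  set b : ℕ → ℕ := bfun h c n ΔX ΔY w with hbdef
  set S₀ : Finset (Fin (h + 1) → Fin n) :=
    (Finset.univ.filter fun π : Circuit h n =>
      (∀ j, lVal LX π j = lVal LX π (w j)) ∧ lVal LY π i = lVal LY π₂ i').image
      (fun π => π.1) with hS₀
  have hcard : (Finset.univ.filter fun π : Circuit h n =>
      (∀ j, lVal LX π j = lVal LX π (w j)) ∧ lVal LY π i = lVal LY π₂ i').card = S₀.card :=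
    (Finset.card_image_of_injective _ (fun a b hab => Subtype.ext hab)).symm
  have hLval : ∀ t, (L t : ℕ) = (c + t) % (h + 1) := fun t => rfl
  have hLtime : ∀ q : ℕ, q < h + 1 → (L ((q + (h + 1) - c) % (h + 1)) : ℕ) = q := by
    intro q hq
    rw [hLval, Nat.add_mod_mod]
    have he : c + (q + (h + 1) - c) = q + (h + 1) := by omega
    rw [he, Nat.add_mod_right, Nat.mod_eq_of_lt hq]
  -- ordF facts
  have hordne : ∀ x y : Fin h, x ≠ y → ordF h c x ≠ ordF h c y := by
    intro x y hxy
    exact ordInj hch x y x.isLt y.isLt (fun e => hxy (Fin.ext e))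
  -- injectivity
  have hinj : ∀ f ∈ S₀, ∀ g ∈ S₀, (∀ t, t < h + 1 → f (L t) = g (L t)) → f = g := by
    intro f _ g _ hagree
    funext p
    have hplt : ((p : ℕ) + (h + 1) - c) % (h + 1) < h + 1 := Nat.mod_lt _ (by omega)
    have hLp : L (((p : ℕ) + (h + 1) - c) % (h + 1)) = p := Fin.ext (hLtime p p.isLt)
    have := hagree _ hplt
    rwa [hLp] at this
  -- the sequential bound
  have main : S₀.card ≤ ∏ t ∈ Finset.range (h + 1), b t := by
    apply seqBound (h + 1) L b S₀ hinj
    intro t ht f hf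
    rw [hS₀, Finset.mem_image] at hf
    obtain ⟨π, hπm, rfl⟩ := hf
    rw [Finset.mem_filter] at hπm
    obtain ⟨-, hπQ⟩ := hπm
    rcases t with _ | t
    · -- t = 0
      have hbv : b 0 = n := by simp [hbdef, bfun]
      rw [hbv]
      calc _ ≤ (Finset.univ : Finset (Fin n)).card := Finset.card_le_univ _
        _ = n := by simp
    rcases t with _ | s
    · -- t = 1
      have hbv : b 1 = ΔY := by simp [hbdef, bfun]
      rw [hbv]
      refine le_trans (Finset.card_le_card (?_ : _ ⊆ Finset.univ.filter fun l =>
        LY n (π.1 (L 0)) l = lVal LY π₂ i')) (hY n _ _)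
      intro x hx
      simp only [Finset.mem_image] at hx
      obtain ⟨g, hg, rfl⟩ := hx
      rw [Finset.mem_filter] at hg
      obtain ⟨hgS, hgag⟩ := hg
      rw [hS₀, Finset.mem_image] at hgS
      obtain ⟨ρ, hρm, rfl⟩ := hgS
      rw [Finset.mem_filter] at hρm
      have hρQ := hρm.2
      have hL0 : L 0 = i.castSucc := by
        apply Fin.ext
        rw [hLval, Fin.coe_castSucc, Nat.add_zero, Nat.mod_eq_of_lt (by omega)]
      have hL1 : L 1 = i.succ := by
        apply Fin.ext
        rw [hLval, Fin.val_succ, Nat.mod_eq_of_lt (by omega)]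
      have e0 : ρ.1 (L 0) = π.1 (L 0) := hgag 0 (by omega)
      refine Finset.mem_filter.mpr ⟨Finset.mem_univ _, ?_⟩
      calc LY n (π.1 (L 0)) (ρ.1 (L 1))
          = LY n (ρ.1 i.castSucc) (ρ.1 i.succ) := by rw [← e0, hL0, hL1]
        _ = lVal LY π₂ i' := hρQ.2
    -- t = s + 2
    have hplt : (c + (s + 2)) % (h + 1) < h + 1 := Nat.mod_lt _ (by omega)
    by_cases hp0 : (c + (s + 2)) % (h + 1) = 0
    · -- wrap position : value forced by the circuit condition
      have hnF : ¬ freeP h c w (s + 2) := by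
        rintro ⟨j, hj, -⟩
        omega
      have hbv : b (s + 2) = ΔX + 1 := by
        rw [hbdef]
        unfold bfun
        rw [if_neg (by omega), if_neg (by omega), if_neg hnF]
      rw [hbv]
      refine le_trans (Finset.card_le_card
        (?_ : _ ⊆ ({π.1 (L (s + 1))} : Finset (Fin n))))
        (by simp only [Finset.card_singleton]; omega)
      intro x hx
      simp only [Finset.mem_image] at hx
      obtain ⟨g, hg, rfl⟩ := hx
      rw [Finset.mem_filter] at hg
      obtain ⟨hgS, hgag⟩ := hg
      rw [hS₀, Finset.mem_image] at hgS
      obtain ⟨ρ, hρm, rfl⟩ := hgS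
      have hLt0 : L (s + 2) = (0 : Fin (h + 1)) := by
        apply Fin.ext
        rw [hLval]
        simpa using hp0
      have hcs : c + (s + 2) = h + 1 := by
        have := modCases (c + (s + 2)) (h + 1) (by omega)
        omega
      have hLt1 : L (s + 1) = Fin.last h := by
        apply Fin.ext
        rw [hLval, Fin.val_last, Nat.mod_eq_of_lt (by omega)]
        omega
      have hcirc := ρ.2
      rw [Finset.mem_singleton, hLt0]
      calc ρ.1 0 = ρ.1 (Fin.last h) := hcirc
        _ = ρ.1 (L (s + 1)) := (congrArg ρ.1 hLt1).symm
        _ = π.1 (L (s + 1)) := hgag (s + 1) (by omega)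
    · -- proper step
      have hp1 : 1 ≤ (c + (s + 2)) % (h + 1) := by omega
      have hjlt : (c + (s + 2)) % (h + 1) - 1 < h := by omega
      set j : Fin h := ⟨(c + (s + 2)) % (h + 1) - 1, hjlt⟩ with hjdef
      have hjval : (j : ℕ) = (c + (s + 2)) % (h + 1) - 1 := rfl
      have hLt : L (s + 2) = j.succ := by
        apply Fin.ext
        rw [hLval, Fin.val_succ, hjval]
        omega
      have hLt1 : L (s + 1) = j.castSucc := by
        apply Fin.ext
        rw [hLval, Fin.coe_castSucc, hjval]
        have m1 := modCases (c + (s + 2)) (h + 1) (by omega)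
        have m2 := modCases (c + (s + 1)) (h + 1) (by omega)
        omega
      by_cases hF : ordF h c j < ordF h c (w j)
      · -- free step
        have hFr : freeP h c w (s + 2) := ⟨j, by omega, hF⟩
        have hbv : b (s + 2) = n := by
          rw [hbdef]
          unfold bfun
          rw [if_neg (by omega), if_neg (by omega), if_pos hFr]
        rw [hbv]
        calc _ ≤ (Finset.univ : Finset (Fin n)).card := Finset.card_le_univ _
          _ = n := by simp
      · -- constrained step
        have hF2 : ordF h c (w j) < ordF h c j := by
          have := hordne (w j) j (hw2 j)
          omega
        have hnF : ¬ freeP h c w (s + 2) := by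
          rintro ⟨j', hj', hlt'⟩
          have hjj : j' = j := Fin.ext (by omega)
          rw [hjj] at hlt'
          exact hF hlt'
        have hbv : b (s + 2) = ΔX + 1 := by
          rw [hbdef]
          unfold bfun
          rw [if_neg (by omega), if_neg (by omega), if_neg hnF]
        rw [hbv]
        have hF2' : ((w j : ℕ) + h - c) % h
            < ((c + (s + 2)) % (h + 1) - 1 + h - c) % h := hF2
        have hkey := keyArith hch (w j).isLt (by omega) hp1 hF2'
        have hLτ1 : L (((w j : ℕ) + (h + 1) - c) % (h + 1)) = (w j).castSucc :=
          Fin.ext ((hLtime _ (by omega)).trans (Fin.coe_castSucc _).symm)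
        have hLτ2 : L (((w j : ℕ) + 1 + (h + 1) - c) % (h + 1)) = (w j).succ :=
          Fin.ext ((hLtime _ (by omega)).trans (Fin.val_succ _).symm)
        refine le_trans (Finset.card_le_card (?_ : _ ⊆ Finset.univ.filter fun l =>
          LX n (π.1 (L (s + 1))) l = LX n (π.1 ((w j).castSucc)) (π.1 ((w j).succ))))
          (le_trans (hX n _ _) (by omega))
        intro x hx
        simp only [Finset.mem_image] at hx
        obtain ⟨g, hg, rfl⟩ := hx
        rw [Finset.mem_filter] at hg
        obtain ⟨hgS, hgag⟩ := hg
        rw [hS₀, Finset.mem_image] at hgS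
        obtain ⟨ρ, hρm, rfl⟩ := hgS
        rw [Finset.mem_filter] at hρm
        have hρQ := hρm.2
        have hmatch := hρQ.1 j
        refine Finset.mem_filter.mpr ⟨Finset.mem_univ _, ?_⟩
        have e1 : ρ.1 (L (s + 1)) = π.1 (L (s + 1)) := hgag (s + 1) (by omega)
        have e2 : ρ.1 ((w j).castSucc) = π.1 ((w j).castSucc) := by
          rw [← hLτ1]
          exact hgag _ hkey.1
        have e3 : ρ.1 ((w j).succ) = π.1 ((w j).succ) := by
          rw [← hLτ2]
          exact hgag _ hkey.2
        calc LX n (π.1 (L (s + 1))) (ρ.1 (L (s + 2)))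
            = LX n (ρ.1 j.castSucc) (ρ.1 j.succ) := by rw [← e1, hLt1, hLt]
          _ = LX n (ρ.1 ((w j).castSucc)) (ρ.1 ((w j).succ)) := hmatch
          _ = LX n (π.1 ((w j).castSucc)) (π.1 ((w j).succ)) := by rw [e2, e3]
  -- now bound the product
  have hA : (Finset.univ.filter fun j : Fin h => ordF h c j < ordF h c (w j)).card = h / 2 :=
    halfCount w hw1 hw2 (fun x => ordF h c x) (fun x y hxy => hordne x y hxy)
  have hiA : i ∈ Finset.univ.filter fun j : Fin h => ordF h c j < ordF h c (w j) := by
    refine Finset.mem_filter.mpr ⟨Finset.mem_univ _, ?_⟩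
    have h1 : ordF h c i = 0 := by
      unfold ordF
      have he : (i : ℕ) + h - c = h := by omega
      rw [he, Nat.mod_self]
    have h2 := hordne (w i) i (hw2 i)
    omega
  have hFc : ((Finset.Ico 2 (h + 1)).filter (freeP h c w)).card ≤ h / 2 - 1 := by
    have hsub : ((Finset.Ico 2 (h + 1)).filter (freeP h c w)).card
        ≤ ((Finset.univ.filter fun j : Fin h =>
            ordF h c j < ordF h c (w j)).erase i).card := by
      apply Finset.card_le_card_of_injOn
        (fun t => (⟨(c + t) % (h + 1) - 1, by
          have := Nat.mod_lt (c + t) (show 0 < h + 1 by omega)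
          omega⟩ : Fin h))
      · intro t htm
        rw [Finset.mem_coe, Finset.mem_filter, Finset.mem_Ico] at htm
        obtain ⟨⟨ht2, htlt⟩, j', hj', hlt'⟩ := htm
        have hgen : ∀ x : Fin h, (x : ℕ) + 1 = (c + t) % (h + 1) →
            x ∈ (Finset.univ.filter fun j : Fin h =>
              ordF h c j < ordF h c (w j)).erase i := by
          intro x hx
          have hxj : x = j' := Fin.ext (by omega)
          subst hxj
          refine Finset.mem_erase.mpr
            ⟨?_, Finset.mem_filter.mpr ⟨Finset.mem_univ _, hlt'⟩⟩
          intro he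
          have hev : (x : ℕ) = (i : ℕ) := congrArg Fin.val he
          have m1 := modCases (c + t) (h + 1) (by omega)
          omega
        apply hgen
        show (c + t) % (h + 1) - 1 + 1 = (c + t) % (h + 1)
        omega
      · intro t htm t' htm' he
        rw [Finset.mem_coe, Finset.mem_filter, Finset.mem_Ico] at htm htm'
        obtain ⟨⟨ht2, htlt⟩, j1, hj1, -⟩ := htm
        obtain ⟨⟨ht2', htlt'⟩, j2, hj2, -⟩ := htm'
        have hev : (c + t) % (h + 1) - 1 = (c + t') % (h + 1) - 1 := congrArg Fin.val he
        have m1 := modCases (c + t) (h + 1) (by omega)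
        have m2 := modCases (c + t') (h + 1) (by omega)
        omega
    rwa [Finset.card_erase_of_mem hiA, hA] at hsub
  have hprod : ∏ t ∈ Finset.range (h + 1), b t ≤ (ΔY + 1) * (ΔX + 1) ^ h * n ^ (h / 2) := by
    have e01 : ∏ t ∈ Finset.range (h + 1), b t
        = b 0 * (b 1 * ∏ t ∈ Finset.Ico 2 (h + 1), b t) := by
      rw [Finset.range_eq_Ico, Finset.prod_eq_prod_Ico_succ_bot (by omega : 0 < h + 1),
        Finset.prod_eq_prod_Ico_succ_bot (by omega : 1 < h + 1)]
    have hb0 : b 0 = n := by simp [hbdef, bfun]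
    have hb1 : b 1 = ΔY := by simp [hbdef, bfun]
    have hbif : ∏ t ∈ Finset.Ico 2 (h + 1), b t
        = ∏ t ∈ Finset.Ico 2 (h + 1),
            (@ite _ (freeP h c w t) (Classical.propDecidable _) n (ΔX + 1)) := by
      refine Finset.prod_congr rfl fun t htm => ?_
      rw [Finset.mem_Ico] at htm
      rw [hbdef]
      unfold bfun
      rw [if_neg (by omega), if_neg (by omega)]
    have hite : ∏ t ∈ Finset.Ico 2 (h + 1),
          (@ite _ (freeP h c w t) (Classical.propDecidable _) n (ΔX + 1))
        = n ^ ((Finset.Ico 2 (h + 1)).filter (freeP h c w)).card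
          * (ΔX + 1) ^ ((Finset.Ico 2 (h + 1)).filter fun t => ¬ freeP h c w t).card := by
      rw [Finset.prod_ite, Finset.prod_const, Finset.prod_const]
    have hG : ((Finset.Ico 2 (h + 1)).filter fun t => ¬ freeP h c w t).card ≤ h := by
      refine le_trans (Finset.card_filter_le _ _) ?_
      rw [Nat.card_Ico]
      omega
    rw [e01, hb0, hb1, hbif, hite]
    have h1 : n ^ ((Finset.Ico 2 (h + 1)).filter (freeP h c w)).card ≤ n ^ (h / 2 - 1) :=
      Nat.pow_le_pow_right hn hFc
    have h2 : (ΔX + 1) ^ ((Finset.Ico 2 (h + 1)).filter fun t => ¬ freeP h c w t).card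
        ≤ (ΔX + 1) ^ h := Nat.pow_le_pow_right (by omega) hG
    have hpow : n * n ^ (h / 2 - 1) = n ^ (h / 2) := by
      rw [← pow_succ']
      congr 1
      omega
    calc n * (ΔY * (n ^ ((Finset.Ico 2 (h + 1)).filter (freeP h c w)).card
            * (ΔX + 1) ^ ((Finset.Ico 2 (h + 1)).filter fun t => ¬ freeP h c w t).card))
        ≤ n * ((ΔY + 1) * (n ^ (h / 2 - 1) * (ΔX + 1) ^ h)) :=
          Nat.mul_le_mul_left _ (Nat.mul_le_mul (by omega) (Nat.mul_le_mul h1 h2))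
      _ = (ΔY + 1) * (ΔX + 1) ^ h * n ^ (h / 2) := by
          rw [← hpow]
          ring
  rw [hcard]
  exact le_trans main hprod

end aux

/-- given a fixed circuit `π₂`, the number of `L_X`-pair-matched circuits
`π₁` sharing no `L_X`-value with `π₂` but sharing an `L_Y`-value with `π₂` is `O(n^{h/2})`,
uniformly in `π₂`. -/
theorem statement18
    {E E' : Type*} [DecidableEq E] [DecidableEq E']
    (LX : (n : ℕ) → Fin n → Fin n → E) (LY : (n : ℕ) → Fin n → Fin n → E')
    (hBX : propertyB LX) (hBY : propertyB LY)
    (h : ℕ) (hh : Even h) :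
    ∃ C : ℝ, ∀ (n : ℕ) (π₂ : Circuit h n),
      (Nat.card ↥{π₁ : Circuit h n |
          (∀ i : Fin h,
            (Finset.univ.filter fun i' : Fin h => lVal LX π₁ i' = lVal LX π₁ i).card = 2) ∧
          (∀ i i' : Fin h, lVal LX π₁ i ≠ lVal LX π₂ i') ∧
          ∃ i i' : Fin h, lVal LY π₁ i = lVal LY π₂ i'} : ℝ)
        ≤ C * (n : ℝ) ^ (h / 2) := by
  classical
  obtain ⟨ΔX, hΔX⟩ := hBX
  obtain ⟨ΔY, hΔY⟩ := hBY
  set K := Fintype.card (Fin h × Fin h × (Fin h → Fin h)) with hK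
  refine ⟨((K * ((ΔY + 1) * (ΔX + 1) ^ h) : ℕ) : ℝ), ?_⟩
  intro n π₂
  have hsetcard : Nat.card ↥{π₁ : Circuit h n |
        (∀ i : Fin h,
          (Finset.univ.filter fun i' : Fin h => lVal LX π₁ i' = lVal LX π₁ i).card = 2) ∧
        (∀ i i' : Fin h, lVal LX π₁ i ≠ lVal LX π₂ i') ∧
        ∃ i i' : Fin h, lVal LY π₁ i = lVal LY π₂ i'}
      = (Finset.univ.filter fun π₁ : Circuit h n =>
        (∀ i : Fin h,
          (Finset.univ.filter fun i' : Fin h => lVal LX π₁ i' = lVal LX π₁ i).card = 2) ∧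
        (∀ i i' : Fin h, lVal LX π₁ i ≠ lVal LX π₂ i') ∧
        ∃ i i' : Fin h, lVal LY π₁ i = lVal LY π₂ i').card := by
    have he : {π₁ : Circuit h n |
        (∀ i : Fin h,
          (Finset.univ.filter fun i' : Fin h => lVal LX π₁ i' = lVal LX π₁ i).card = 2) ∧
        (∀ i i' : Fin h, lVal LX π₁ i ≠ lVal LX π₂ i') ∧
        ∃ i i' : Fin h, lVal LY π₁ i = lVal LY π₂ i'}
        = ↑(Finset.univ.filter fun π₁ : Circuit h n =>
        (∀ i : Fin h,
          (Finset.univ.filter fun i' : Fin h => lVal LX π₁ i' = lVal LX π₁ i).card = 2) ∧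
        (∀ i i' : Fin h, lVal LX π₁ i ≠ lVal LX π₂ i') ∧
        ∃ i i' : Fin h, lVal LY π₁ i = lVal LY π₂ i') := by
      ext x
      simp
    rw [he, Nat.card_coe_set_eq, Set.ncard_coe_finset]
  have hmain : (Finset.univ.filter fun π₁ : Circuit h n =>
        (∀ i : Fin h,
          (Finset.univ.filter fun i' : Fin h => lVal LX π₁ i' = lVal LX π₁ i).card = 2) ∧
        (∀ i i' : Fin h, lVal LX π₁ i ≠ lVal LX π₂ i') ∧
        ∃ i i' : Fin h, lVal LY π₁ i = lVal LY π₂ i').card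
      ≤ K * ((ΔY + 1) * (ΔX + 1) ^ h) * n ^ (h / 2) := by
    set Sd : Fin h × Fin h × (Fin h → Fin h) → Finset (Circuit h n) := (fun d =>
      if (∀ j, d.2.2 (d.2.2 j) = j) ∧ (∀ j, d.2.2 j ≠ j) then
        Finset.univ.filter fun π : Circuit h n =>
          (∀ j, lVal LX π j = lVal LX π (d.2.2 j)) ∧ lVal LY π d.1 = lVal LY π₂ d.2.1
      else ∅) with hSd
    have hcover : (Finset.univ.filter fun π₁ : Circuit h n =>
        (∀ i : Fin h,
          (Finset.univ.filter fun i' : Fin h => lVal LX π₁ i' = lVal LX π₁ i).card = 2) ∧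
        (∀ i i' : Fin h, lVal LX π₁ i ≠ lVal LX π₂ i') ∧
        ∃ i i' : Fin h, lVal LY π₁ i = lVal LY π₂ i')
        ⊆ Finset.univ.biUnion Sd := by
      intro π hπ
      rw [Finset.mem_filter] at hπ
      obtain ⟨-, hpm, hnc, a, a', ha⟩ := hπ
      obtain ⟨w, hw1, hw2, hwv⟩ := exists_match LX π hpm
      refine Finset.mem_biUnion.mpr ⟨(a, a', w), Finset.mem_univ _, ?_⟩
      rw [hSd]
      show π ∈ if (∀ j, w (w j) = j) ∧ (∀ j, w j ≠ j) then
        Finset.univ.filter fun π : Circuit h n =>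
          (∀ j, lVal LX π j = lVal LX π (w j)) ∧ lVal LY π a = lVal LY π₂ a'
      else ∅
      rw [if_pos ⟨hw1, hw2⟩]
      exact Finset.mem_filter.mpr ⟨Finset.mem_univ _, hwv, ha⟩
    have hbound : ∀ d : Fin h × Fin h × (Fin h → Fin h),
        (Sd d).card ≤ (ΔY + 1) * (ΔX + 1) ^ h * n ^ (h / 2) := by
      intro d
      rw [hSd]
      show (if (∀ j, d.2.2 (d.2.2 j) = j) ∧ (∀ j, d.2.2 j ≠ j) then
        Finset.univ.filter fun π : Circuit h n =>
          (∀ j, lVal LX π j = lVal LX π (d.2.2 j)) ∧ lVal LY π d.1 = lVal LY π₂ d.2.1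
        else ∅).card ≤ _
      by_cases hd : (∀ j, d.2.2 (d.2.2 j) = j) ∧ (∀ j, d.2.2 j ≠ j)
      · rw [if_pos hd]
        exact classBound LX LY ΔX ΔY hΔX hΔY hh n π₂ d.1 d.2.1 d.2.2 hd.1 hd.2
      · rw [if_neg hd]
        simp
    calc _ ≤ (Finset.univ.biUnion Sd).card := Finset.card_le_card hcover
      _ ≤ ∑ d ∈ Finset.univ, (Sd d).card := Finset.card_biUnion_le
      _ ≤ ∑ _d ∈ (Finset.univ : Finset (Fin h × Fin h × (Fin h → Fin h))),
            ((ΔY + 1) * (ΔX + 1) ^ h * n ^ (h / 2)) :=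
          Finset.sum_le_sum fun d _ => hbound d
      _ = K * ((ΔY + 1) * (ΔX + 1) ^ h * n ^ (h / 2)) := by
          rw [Finset.sum_const, smul_eq_mul, Finset.card_univ]
      _ = K * ((ΔY + 1) * (ΔX + 1) ^ h) * n ^ (h / 2) := by ring
  rw [hsetcard]
  calc ((Finset.univ.filter fun π₁ : Circuit h n =>
        (∀ i : Fin h,
          (Finset.univ.filter fun i' : Fin h => lVal LX π₁ i' = lVal LX π₁ i).card = 2) ∧
        (∀ i i' : Fin h, lVal LX π₁ i ≠ lVal LX π₂ i') ∧
        ∃ i i' : Fin h, lVal LY π₁ i = lVal LY π₂ i').card : ℝ)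
      ≤ ((K * ((ΔY + 1) * (ΔX + 1) ^ h) * n ^ (h / 2) : ℕ) : ℝ) := Nat.cast_le.mpr hmain
    _ = ((K * ((ΔY + 1) * (ΔX + 1) ^ h) : ℕ) : ℝ) * (n : ℝ) ^ (h / 2) := by
        push_cast
        ring
end
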